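/- arXiv:2508.10756 — 8 statements merged into one kernel-verified Lean document; each statement's English description precedes it below -/
import Mathlib

section
/- Let n ≥ 1 and let H be a subgroup of the dihedral group D_{2n}. If (D_{2n}, H) is a strong Gelfand pair, then H is one of: (i) a reflection subgroup ⟨ba^i⟩ for some i; (ii) a dihedral subgroup of D_{2n}; (iii) the maximal cyclic subgroup ⟨a⟩; or (iv), in case n is even, the index-four cyclic subgroup ⟨a²⟩. -/
open CategoryTheory

/-- `(G, H)` is a strong Gelfand pair: the restriction to `H` of every irreducible
complex representation of `G` is multiplicity-free, i.e. every irreducible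
complex representation of `H` occurs in it with multiplicity at most one
(equivalently, by Frobenius reciprocity, every irreducible character of `H`
induces to a multiplicity-free character of `G`). -/
def IsStrongGelfandPair (G : Type) [Group G] (H : Subgroup G) : Prop :=
  ∀ (V : FDRep ℂ G) (W : FDRep ℂ H), Simple V → Simple W →
    Module.finrank ℂ (W ⟶ (Action.res (FGModuleCat ℂ) H.subtype).obj V) ≤ 1

section SimpleCriterion

lemma fdrep_simple_of_submodule {G : Type} [Group G] (X : FDRep ℂ G)
    (hX : ∃ v : X, v ≠ 0)
    (hsub : ∀ p : Submodule ℂ X, (∀ (g : G) (x : X), x ∈ p → X.ρ g x ∈ p) → p = ⊥ ∨ p = ⊤) :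
    Simple X := by
  constructor
  intro Y f hf
  constructor
  · intro hiso h0
    obtain ⟨v, hv⟩ := hX
    apply hv
    obtain ⟨g, _, hg⟩ := hiso.out
    calc v = (g ≫ f).hom v := by rw [hg]; rfl
      _ = f.hom (g.hom v) := rfl
      _ = 0 := by rw [h0]; rfl
  · intro hf0
    have hmono : Mono ((Action.forget (FGModuleCat ℂ) (MonCat.of G) ⋙
        forget₂ (FGModuleCat ℂ) (ModuleCat ℂ)).map f) := inferInstance
    have hinj : Function.Injective f.hom := by
      rwa [ModuleCat.mono_iff_injective] at hmono
    set p := LinearMap.range (ConcreteCategory.hom f.hom : Y →ₗ[ℂ] X) with hp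
    have hinv : ∀ (g : G) (x : X), x ∈ p → X.ρ g x ∈ p := by
      rintro g x ⟨y, rfl⟩
      refine ⟨Y.ρ g y, ?_⟩
      have h := ConcreteCategory.congr_hom (f.comm g) y
      exact h
    rcases hsub p hinv with h | h
    · exfalso
      apply hf0
      have : (ConcreteCategory.hom f.hom : Y →ₗ[ℂ] X) = 0 := LinearMap.range_eq_bot.mp h
      ext y
      exact congrFun (congrArg _ this) y
    · have hsurj : Function.Surjective f.hom := LinearMap.range_eq_top.mp h
      let e : Y ≃ₗ[ℂ] X := LinearEquiv.ofBijective (ConcreteCategory.hom f.hom : Y →ₗ[ℂ] X) ⟨hinj, hsurj⟩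
      have : IsIso f.hom := ⟨ConcreteCategory.ofHom (e.symm.toLinearMap : X →ₗ[ℂ] Y), by
        ext y; exact e.symm_apply_apply y, by ext x; exact e.apply_symm_apply x⟩
      infer_instance

end SimpleCriterion

section TwoDimRep

/-- diagonal map `(x, y) ↦ (u x, v y)` -/
def dmap (u v : ℂ) : (ℂ × ℂ) →ₗ[ℂ] (ℂ × ℂ) where
  toFun p := (u * p.1, v * p.2)
  map_add' p q := by simp [Prod.ext_iff]; constructor <;> ring
  map_smul' c p := by simp [Prod.ext_iff]; constructor <;> ring

/-- antidiagonal map `(x, y) ↦ (u y, v x)` -/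
def amap (u v : ℂ) : (ℂ × ℂ) →ₗ[ℂ] (ℂ × ℂ) where
  toFun p := (u * p.2, v * p.1)
  map_add' p q := by simp [Prod.ext_iff]; constructor <;> ring
  map_smul' c p := by simp [Prod.ext_iff]; constructor <;> ring

variable {n : ℕ}

/-- the 2-dimensional representation of the dihedral group attached to a character `χ`
of `ZMod n`. -/
def drep (χ : ZMod n → ℂ) (hχ : ∀ i j, χ (i + j) = χ i * χ j) (hχ0 : χ 0 = 1) :
    Representation ℂ (DihedralGroup n) (ℂ × ℂ) where
  toFun g :=
    match g with
    | DihedralGroup.r i => dmap (χ i) (χ (-i))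
    | DihedralGroup.sr i => amap (χ (-i)) (χ i)
  map_one' := by
    show dmap (χ 0) (χ (-0)) = _
    apply LinearMap.ext; intro p
    simp [dmap, neg_zero, hχ0]
  map_mul' g h := by
    rcases g with i | i <;> rcases h with j | j <;>
      simp only [DihedralGroup.r_mul_r, DihedralGroup.r_mul_sr, DihedralGroup.sr_mul_r,
        DihedralGroup.sr_mul_sr] <;>
      apply LinearMap.ext <;> intro p <;>
      apply Prod.ext <;>
      simp only [dmap, amap, Module.End.mul_apply, LinearMap.coe_mk, AddHom.coe_mk,
        sub_eq_add_neg, neg_add, neg_neg, hχ] <;>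
      ring

end TwoDimRep

section DrepSimple

variable {n : ℕ}

lemma drep_apply_r (χ : ZMod n → ℂ) (hχ : ∀ i j, χ (i + j) = χ i * χ j) (hχ0 : χ 0 = 1)
    (i : ZMod n) (p : ℂ × ℂ) :
    drep χ hχ hχ0 (DihedralGroup.r i) p = (χ i * p.1, χ (-i) * p.2) := rfl

lemma drep_apply_sr (χ : ZMod n → ℂ) (hχ : ∀ i j, χ (i + j) = χ i * χ j) (hχ0 : χ 0 = 1)
    (i : ZMod n) (p : ℂ × ℂ) :
    drep χ hχ hχ0 (DihedralGroup.sr i) p = (χ (-i) * p.2, χ i * p.1) := rfl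

lemma drep_submodules (χ : ZMod n → ℂ) (hχ : ∀ i j, χ (i + j) = χ i * χ j) (hχ0 : χ 0 = 1)
    (h2 : χ 1 * χ 1 ≠ 1) (p : Submodule ℂ (ℂ × ℂ))
    (hp : ∀ (g : DihedralGroup n) (x : ℂ × ℂ), x ∈ p → drep χ hχ hχ0 g x ∈ p) :
    p = ⊥ ∨ p = ⊤ := by
  by_cases hbot : p = ⊥
  · exact Or.inl hbot
  right
  obtain ⟨v, hvp, hv⟩ := (Submodule.ne_bot_iff p).mp hbot
  set ω := χ 1 with hω
  set ω' := χ (-1) with hω'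
  have hωω' : ω * ω' = 1 := by rw [hω, hω', ← hχ, add_neg_cancel, hχ0]
  have hne : ω - ω' ≠ 0 := by
    intro h
    apply h2
    have hωeq : ω = ω' := sub_eq_zero.mp h
    nth_rewrite 2 [hωeq]
    exact hωω'
  have he1e2 : ∀ w : ℂ × ℂ, w ∈ p → w ≠ 0 → ((1:ℂ),(0:ℂ)) ∈ p ∧ ((0:ℂ),(1:ℂ)) ∈ p := by
    intro w hwp hw
    have hr : ((ω * w.1, ω' * w.2) : ℂ × ℂ) ∈ p := hp (DihedralGroup.r 1) w hwp
    have hw1 : (((ω - ω') * w.1, (0:ℂ)) : ℂ × ℂ) ∈ p := by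
      have := p.sub_mem hr (p.smul_mem ω' hwp)
      convert this using 1
      simp only [Prod.ext_iff, Prod.smul_def, smul_eq_mul, Prod.mk_sub_mk, Prod.fst_sub]
      constructor <;> ring
    have hw2 : (((0:ℂ), (ω' - ω) * w.2) : ℂ × ℂ) ∈ p := by
      have := p.sub_mem hr (p.smul_mem ω hwp)
      convert this using 1
      simp only [Prod.ext_iff, Prod.smul_def, smul_eq_mul, Prod.mk_sub_mk, Prod.fst_sub]
      constructor <;> ring
    have key : ∀ q : ℂ × ℂ, q ∈ p → q.2 = 0 → q.1 ≠ 0 →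
        ((1:ℂ),(0:ℂ)) ∈ p ∧ ((0:ℂ),(1:ℂ)) ∈ p := by
      intro q hqp hq2 hq1
      have he1 : ((1:ℂ),(0:ℂ)) ∈ p := by
        have := p.smul_mem (q.1)⁻¹ hqp
        convert this using 1
        simp only [Prod.ext_iff, Prod.smul_def, smul_eq_mul, hq2]
        constructor
        · field_simp
        · simp
      refine ⟨he1, ?_⟩
      have hs : ((χ (-0) * ((1:ℂ),(0:ℂ)).2, χ 0 * ((1:ℂ),(0:ℂ)).1) : ℂ × ℂ) ∈ p :=
        hp (DihedralGroup.sr 0) _ he1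
      simpa [hχ0] using hs
    have key' : ∀ q : ℂ × ℂ, q ∈ p → q.1 = 0 → q.2 ≠ 0 →
        ((1:ℂ),(0:ℂ)) ∈ p ∧ ((0:ℂ),(1:ℂ)) ∈ p := by
      intro q hqp hq1 hq2
      have he2 : ((0:ℂ),(1:ℂ)) ∈ p := by
        have := p.smul_mem (q.2)⁻¹ hqp
        convert this using 1
        simp only [Prod.ext_iff, Prod.smul_def, smul_eq_mul, hq1]
        constructor
        · simp
        · field_simp
      refine ⟨?_, he2⟩
      have hs : ((χ (-0) * ((0:ℂ),(1:ℂ)).2, χ 0 * ((0:ℂ),(1:ℂ)).1) : ℂ × ℂ) ∈ p :=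
        hp (DihedralGroup.sr 0) _ he2
      simpa [hχ0] using hs
    by_cases hw1' : w.1 ≠ 0
    · exact key _ hw1 rfl (mul_ne_zero hne hw1')
    · push_neg at hw1'
      have hw2' : w.2 ≠ 0 := by
        intro h
        exact hw (Prod.ext hw1' h)
      have hne' : ω' - ω ≠ 0 := fun h => hne (by linear_combination -h)
      exact key' _ hw2 rfl (mul_ne_zero hne' hw2')
  obtain ⟨he1, he2⟩ := he1e2 v hvp hv
  rw [Submodule.eq_top_iff']
  intro x
  have hx : x = x.1 • (((1:ℂ),(0:ℂ)) : ℂ × ℂ) + x.2 • (((0:ℂ),(1:ℂ)) : ℂ × ℂ) := by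
    simp [Prod.ext_iff, Prod.smul_def]
  rw [hx]
  exact p.add_mem (p.smul_mem _ he1) (p.smul_mem _ he2)

lemma drep_simple (χ : ZMod n → ℂ) (hχ : ∀ i j, χ (i + j) = χ i * χ j) (hχ0 : χ 0 = 1)
    (h2 : χ 1 * χ 1 ≠ 1) :
    Simple (FDRep.of (drep χ hχ hχ0)) :=
  fdrep_simple_of_submodule _
    ⟨((1 : ℂ), (0 : ℂ)), fun h => one_ne_zero (congrArg Prod.fst h)⟩
    (fun p hp => drep_submodules χ hχ hχ0 h2 p hp)

end DrepSimple

section HomDim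

lemma triv_simple {G : Type} [Group G] :
    Simple (FDRep.of (Representation.trivial ℂ (G := G) (V := ℂ))) := by
  have h1 : ∃ v : ℂ, v ≠ 0 := ⟨1, one_ne_zero⟩
  have h2 : ∀ p : Submodule ℂ ℂ,
      (∀ (g : G) (x : ℂ), x ∈ p → (Representation.trivial ℂ (G := G) (V := ℂ)) g x ∈ p) →
      p = ⊥ ∨ p = ⊤ := fun p _ => eq_bot_or_eq_top p
  exact fdrep_simple_of_submodule _ h1 h2

lemma not_sgp {n : ℕ} (H : Subgroup (DihedralGroup n))
    (χ : ZMod n → ℂ) (hχ : ∀ i j, χ (i + j) = χ i * χ j) (hχ0 : χ 0 = 1)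
    (h2 : χ 1 * χ 1 ≠ 1)
    (htriv : ∀ g : DihedralGroup n, g ∈ H → drep χ hχ hχ0 g = LinearMap.id) :
    ¬ IsStrongGelfandPair (DihedralGroup n) H := by
  intro hSG
  set V := FDRep.of (drep χ hχ hχ0) with hV
  set W := FDRep.of (Representation.trivial ℂ (G := H) (V := ℂ)) with hW
  set resV := (Action.res (FGModuleCat ℂ) H.subtype).obj V with hres
  have e : (W ⟶ resV) ≃ₗ[ℂ] (ℂ →ₗ[ℂ] ℂ × ℂ) :=
    { toFun := fun f => ConcreteCategory.hom f.hom
      map_add' := fun f g => rfl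
      map_smul' := fun c f => rfl
      invFun := fun l =>
        { hom := ConcreteCategory.ofHom l
          comm := fun g => by
            apply ConcreteCategory.hom_ext; intro x
            have hg : ∀ (h : ↥H), l x = (drep χ hχ hχ0 (h : DihedralGroup n)) (l x) := by
              intro h
              rw [htriv _ h.2]
              rfl
            exact hg g }
      left_inv := fun f => rfl
      right_inv := fun l => rfl }
  have hfr : Module.finrank ℂ (W ⟶ resV) = 2 := by
    rw [e.finrank_eq, Module.finrank_linearMap, Module.finrank_self, Module.finrank_prod,
      Module.finrank_self, one_mul]
  have := hSG V W (drep_simple χ hχ hχ0 h2) triv_simple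
  rw [hfr] at this
  omega

end HomDim

section Char

lemma exists_chi (n : ℕ) [NeZero n] (k : ZMod n) (hk : ¬ (n ∣ 2 * k.val)) :
    ∃ (χ : ZMod n → ℂ) (hχ : ∀ i j, χ (i + j) = χ i * χ j) (hχ0 : χ 0 = 1),
      (χ 1 * χ 1 ≠ 1) ∧ (∀ j : ZMod n, k * j = 0 → χ j = 1) := by
  have hn : n ≠ 0 := NeZero.ne n
  set ζ := Complex.exp (2 * Real.pi * Complex.I / n) with hζdef
  have hζ : IsPrimitiveRoot ζ n := Complex.isPrimitiveRoot_exp n hn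
  have hpow : ∀ s : ℕ, ζ ^ (s % n) = ζ ^ s := by
    intro s
    conv_rhs => rw [← Nat.div_add_mod s n]
    rw [pow_add, pow_mul, hζ.pow_eq_one, one_pow, one_mul]
  refine ⟨fun i => ζ ^ (k * i).val, ?_, ?_, ?_, ?_⟩
  · intro i j
    dsimp only
    rw [mul_add, ZMod.val_add, hpow, pow_add]
  · dsimp only
    rw [mul_zero, ZMod.val_zero, pow_zero]
  · dsimp only
    rw [mul_one, ← pow_add, ← two_mul]
    intro h
    exact hk (hζ.pow_eq_one_iff_dvd _ |>.mp h)
  · intro j hj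
    dsimp only
    rw [hj, ZMod.val_zero, pow_zero]

end Char

section DihedralLemmas

open DihedralGroup

variable {n : ℕ}

lemma r_inv (x : ZMod n) : (r x)⁻¹ = r (-x) :=
  inv_eq_of_mul_eq_one_right (by rw [r_mul_r, add_neg_cancel]; exact (one_def).symm)

lemma r_pow (x : ZMod n) (m : ℕ) : (r x) ^ m = r (m • x) := by
  induction m with
  | zero => rw [pow_zero, zero_smul]; exact one_def
  | succ m ih => rw [pow_succ, ih, r_mul_r, succ_nsmul]

lemma r_zpow (x : ZMod n) (c : ℤ) : (r x) ^ c = r (c • x) := by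
  cases c with
  | ofNat m => rw [Int.ofNat_eq_coe, zpow_natCast, _root_.r_pow, natCast_zsmul]
  | negSucc m => rw [zpow_negSucc, _root_.r_pow, r_inv, negSucc_zsmul]

lemma zmultiples_neg {A : Type*} [AddCommGroup A] (x : A) :
    AddSubgroup.zmultiples (-x) = AddSubgroup.zmultiples x := by
  ext y
  simp only [AddSubgroup.mem_zmultiples_iff]
  constructor
  · rintro ⟨c, rfl⟩; exact ⟨-c, by simp⟩
  · rintro ⟨c, rfl⟩; exact ⟨-c, by simp⟩

end DihedralLemmas

/-- Theorem 1 (dihedral): for `n ≥ 1`, every strong Gelfand subgroup `H` of the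
dihedral group `D_{2n}` is (i) a reflection subgroup `⟨b a^i⟩`, (ii) a dihedral
subgroup (one containing a reflection), (iii) the maximal cyclic subgroup `⟨a⟩`,
or (iv) for `n` even, the index-four cyclic subgroup `⟨a²⟩`. -/
theorem strong_gelfand_pairs_of_dihedral (n : ℕ) (hn : 1 ≤ n)
    (H : Subgroup (DihedralGroup n))
    (hH : IsStrongGelfandPair (DihedralGroup n) H) :
    (∃ i : ZMod n, H = Subgroup.zpowers (DihedralGroup.sr i)) ∨
    (∃ i : ZMod n, DihedralGroup.sr i ∈ H) ∨
    H = Subgroup.zpowers (DihedralGroup.r 1) ∨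
    (Even n ∧ H = Subgroup.zpowers (DihedralGroup.r 1 ^ 2)) := by
  by_cases hsr : ∃ i : ZMod n, DihedralGroup.sr i ∈ H
  · exact Or.inr (Or.inl hsr)
  push_neg at hsr
  have : NeZero n := ⟨by omega⟩
  -- the subgroup of rotation indices
  set S : AddSubgroup (ZMod n) :=
    { carrier := {i | DihedralGroup.r i ∈ H}
      zero_mem' := by
        show DihedralGroup.r 0 ∈ H
        rw [← DihedralGroup.one_def]
        exact H.one_mem
      add_mem' := fun {a b} ha hb => by
        show DihedralGroup.r (a + b) ∈ H
        rw [← DihedralGroup.r_mul_r]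
        exact H.mul_mem ha hb
      neg_mem' := fun {a} ha => by
        show DihedralGroup.r (-a) ∈ H
        rw [← r_inv]
        exact H.inv_mem ha } with hSdef
  have hHS : ∀ g, g ∈ H ↔ ∃ j, j ∈ S ∧ g = DihedralGroup.r j := by
    intro g
    constructor
    · intro hg
      cases g with
      | r i => exact ⟨i, hg, rfl⟩
      | sr i => exact absurd hg (hsr i)
    · rintro ⟨j, hj, rfl⟩
      exact hj
  -- classify S
  obtain ⟨a, ha⟩ := Int.subgroup_cyclic (S.comap (Int.castAddHom (ZMod n)))
  have hn0 : (n : ℤ) ∈ S.comap (Int.castAddHom (ZMod n)) := by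
    show (((n : ℤ) : ZMod n)) ∈ S
    rw [Int.cast_natCast, ZMod.natCast_self]
    exact S.zero_mem
  rw [ha, ← AddSubgroup.zmultiples_eq_closure, Int.mem_zmultiples_iff] at hn0
  set d := a.natAbs with hddef
  have hdn : d ∣ n := by
    have := Int.natAbs_dvd_natAbs.mpr hn0
    simpa using this
  have hd0 : d ≠ 0 := by
    intro h
    rw [hddef] at h
    rw [Int.natAbs_eq_zero.mp h] at hn0
    have : n = 0 := by exact_mod_cast (zero_dvd_iff.mp hn0)
    omega
  have hsurj : Function.Surjective (Int.castAddHom (ZMod n)) := ZMod.intCast_surjective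
  have hS : S = AddSubgroup.zmultiples ((d : ℕ) : ZMod n) := by
    rw [← AddSubgroup.map_comap_eq_self_of_surjective hsurj S, ha]
    rw [AddMonoidHom.map_closure, Set.image_singleton, ← AddSubgroup.zmultiples_eq_closure]
    rcases Int.natAbs_eq a with h | h
    · rw [h]
      congr 1
      show (((a.natAbs : ℤ) : ZMod n)) = ((d : ℕ) : ZMod n)
      rw [Int.cast_natCast]
    · rw [h]
      rw [show ((Int.castAddHom (ZMod n)) (-(a.natAbs : ℤ))) = -((d : ℕ) : ZMod n) from by
        show (((-(a.natAbs : ℤ)) : ℤ) : ZMod n) = -((d : ℕ) : ZMod n)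
        rw [Int.cast_neg, Int.cast_natCast], zmultiples_neg]
  -- H is generated by r d
  have hHz : H = Subgroup.zpowers (DihedralGroup.r ((d : ZMod n))) := by
    ext g
    rw [hHS g, Subgroup.mem_zpowers_iff]
    constructor
    · rintro ⟨j, hj, rfl⟩
      rw [hS, AddSubgroup.mem_zmultiples_iff] at hj
      obtain ⟨c, rfl⟩ := hj
      exact ⟨c, (r_zpow _ c).symm ▸ rfl⟩
    · rintro ⟨c, rfl⟩
      refine ⟨c • ((d : ℕ) : ZMod n), ?_, (r_zpow _ c)⟩
      rw [hS]
      exact AddSubgroup.zsmul_mem _ (AddSubgroup.mem_zmultiples _) c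
  rcases (show d = 1 ∨ d = 2 ∨ 3 ≤ d by omega) with hd | hd | hd
  · -- d = 1 : H = ⟨r 1⟩
    right; right; left
    rw [hHz, hd, Nat.cast_one]
  · -- d = 2 : n even, H = ⟨r 1 ^ 2⟩
    right; right; right
    constructor
    · rw [hd] at hdn
      exact even_iff_two_dvd.mpr hdn
    · rw [hHz, hd, DihedralGroup.r_one_pow]
  · -- d ≥ 3 : contradiction
    exfalso
    set m := n / d with hmdef
    have hdm : d * m = n := Nat.mul_div_cancel' hdn
    have hm0 : m ≠ 0 := by
      intro h
      rw [h, mul_zero] at hdm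
      omega
    set k : ZMod n := ((m : ℕ) : ZMod n) with hkdef
    have hmlt : m < n := by
      calc m = 1 * m := (one_mul m).symm
        _ < d * m := (Nat.mul_lt_mul_right (Nat.pos_of_ne_zero hm0)).mpr
            (lt_of_lt_of_le (by norm_num) hd)
        _ = n := hdm
    have hkval : k.val = m := by
      rw [hkdef, ZMod.val_natCast, Nat.mod_eq_of_lt hmlt]
    have h2m : 2 * m < n := by
      calc 2 * m < d * m := (Nat.mul_lt_mul_right (Nat.pos_of_ne_zero hm0)).mpr
            (lt_of_lt_of_le (by norm_num) hd)
        _ = n := hdm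
    have hk : ¬ (n ∣ 2 * k.val) := by
      rw [hkval]
      exact Nat.not_dvd_of_pos_of_lt (Nat.mul_pos (by norm_num) (Nat.pos_of_ne_zero hm0)) h2m
    obtain ⟨χ, hχ, hχ0, h2, hχtriv⟩ := exists_chi n k hk
    have hkS : ∀ j ∈ S, k * j = 0 := by
      intro j hj
      rw [hS, AddSubgroup.mem_zmultiples_iff] at hj
      obtain ⟨c, rfl⟩ := hj
      have : k * ((d : ℕ) : ZMod n) = 0 := by
        rw [hkdef, ← Nat.cast_mul, mul_comm m d, hdm, ZMod.natCast_self]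
      calc k * (c • ((d : ℕ) : ZMod n)) = c • (k * ((d : ℕ) : ZMod n)) := by
            rw [zsmul_eq_mul, zsmul_eq_mul]; ring
        _ = 0 := by rw [this, smul_zero]
    have htriv : ∀ g : DihedralGroup n, g ∈ H → drep χ hχ hχ0 g = LinearMap.id := by
      intro g hg
      obtain ⟨j, hj, rfl⟩ := (hHS g).mp hg
      have h1 : χ j = 1 := hχtriv j (hkS j hj)
      have h2' : χ (-j) = 1 := hχtriv (-j) (by rw [mul_neg, hkS j hj, neg_zero])
      apply LinearMap.ext
      intro p
      show ((χ j) * p.1, (χ (-j)) * p.2) = p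
      rw [h1, h2', one_mul, one_mul]
    exact not_sgp H χ hχ hχ0 h2 htriv hH
end

section
/- Let n ≥ 2 and let H be a subgroup of the dicyclic group Dic_{4n}. If (Dic_{4n}, H) is a strong Gelfand pair, then H is one of: (i) a subgroup of the form ⟨ba^i⟩ for some i; (ii) a dicyclic subgroup of Dic_{4n}; or (iii) a cyclic subgroup of order n or 2n (namely ⟨a²⟩ or ⟨a⟩). -/
open CategoryTheory

namespace SGPAux

/-- A nonzero finite-dimensional representation with no nontrivial invariant submodule
is simple as an object of `FDRep`. -/
theorem simple_of_irreducible {G : Type} [Group G] {X : Type} [AddCommGroup X] [Module ℂ X]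
    [FiniteDimensional ℂ X] (ρ : Representation ℂ G X) (hnt : ∃ v : X, v ≠ 0)
    (hirr : ∀ U : Submodule ℂ X, (∀ (g : G) (v : X), v ∈ U → ρ g v ∈ U) → U = ⊥ ∨ U = ⊤) :
    Simple (FDRep.of ρ) := by
  constructor
  intro Y f hm
  constructor
  · intro hiso h0
    obtain ⟨v, hv⟩ := hnt
    subst h0
    have h1 : inv (0 : Y ⟶ FDRep.of ρ) ≫ (0 : Y ⟶ FDRep.of ρ) = 𝟙 (FDRep.of ρ) :=
      IsIso.inv_hom_id _
    rw [Limits.comp_zero] at h1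
    have h2 := congrArg (fun φ : FDRep.of ρ ⟶ FDRep.of ρ => φ.hom v) h1
    simp only [Action.zero_hom, Action.id_hom] at h2
    exact hv (h2.symm.trans rfl)
  · intro hf
    let fl : (Y.V : Type) →ₗ[ℂ] X := f.hom.hom.hom
    have hcomm : ∀ (g : G) (y : Y.V), fl (Y.ρ g y) = ρ g (fl y) := by
      intro g y
      exact congrArg (fun φ => φ.hom.hom y) (f.comm g)
    have hinj : Function.Injective fl := by
      rw [← LinearMap.ker_eq_bot (f := fl)]
      by_contra hker
      have hKinv : ∀ (g : G) (y : Y.V), y ∈ LinearMap.ker fl →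
          Y.ρ g y ∈ LinearMap.ker fl := by
        intro g y hy
        rw [LinearMap.mem_ker] at hy ⊢
        exact (hcomm g y).trans (by rw [hy, map_zero])
      let ρK : Representation ℂ G (LinearMap.ker fl) :=
        { toFun := fun g => LinearMap.restrict (Y.ρ g) (hKinv g)
          map_one' := by
            apply LinearMap.ext; rintro ⟨y, hy⟩
            apply Subtype.ext
            show (Y.ρ 1) y = y
            rw [map_one]
            rfl
          map_mul' := by
            intro g g'
            apply LinearMap.ext; rintro ⟨y, hy⟩
            apply Subtype.ext
            show (Y.ρ (g * g')) y = (Y.ρ g) ((Y.ρ g') y)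
            rw [map_mul]
            rfl }
      let ι : FDRep.of ρK ⟶ Y :=
        { hom := FGModuleCat.ofHom (LinearMap.ker fl).subtype
          comm := fun g => rfl }
      have h0 : ι ≫ f = (0 : FDRep.of ρK ⟶ Y) ≫ f := by
        rw [Limits.zero_comp]
        apply Action.hom_ext
        ext ⟨y, hy⟩
        exact hy
      have hι := hm.right_cancellation _ _ h0
      obtain ⟨y, hyK, hy0⟩ := (Submodule.ne_bot_iff _).mp hker
      have := congrArg (fun φ : FDRep.of ρK ⟶ Y => φ.hom ⟨y, hyK⟩) hι
      simp only [Action.zero_hom] at this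
      exact hy0 this
    have hsurj : Function.Surjective fl := by
      have hRinv : ∀ (g : G) (v : X), v ∈ LinearMap.range fl → ρ g v ∈ LinearMap.range fl := by
        rintro g v ⟨y, rfl⟩
        exact ⟨Y.ρ g y, (hcomm g y)⟩
      rcases hirr (LinearMap.range fl) hRinv with hbot | htop
      · exfalso
        apply hf
        apply Action.hom_ext
        ext y
        have hy : fl y ∈ LinearMap.range fl := ⟨y, rfl⟩
        rw [hbot] at hy
        simpa using hy
      · rw [← LinearMap.range_eq_top (f := fl)]
        exact htop
    let e : (Y.V : Type) ≃ₗ[ℂ] X := LinearEquiv.ofBijective fl ⟨hinj, hsurj⟩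
    have : IsIso f.hom := by
      refine ⟨FGModuleCat.ofHom e.symm.toLinearMap, ?_, ?_⟩
      · ext y
        exact e.symm_apply_apply y
      · ext x
        exact e.apply_symm_apply x
    exact Action.isIso_of_hom_isIso f

/-- The diagonal linear map `(x, y) ↦ (u x, v y)` on `ℂ²`. -/
def dia (u v : ℂ) : ℂ × ℂ →ₗ[ℂ] ℂ × ℂ where
  toFun p := (u * p.1, v * p.2)
  map_add' p q := by simp [Prod.ext_iff]; constructor <;> ring
  map_smul' c p := by simp [Prod.ext_iff, smul_eq_mul]; constructor <;> ring

/-- The antidiagonal linear map `(x, y) ↦ (u y, v x)` on `ℂ²`. -/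
def sw (u v : ℂ) : ℂ × ℂ →ₗ[ℂ] ℂ × ℂ where
  toFun p := (u * p.2, v * p.1)
  map_add' p q := by simp [Prod.ext_iff]; constructor <;> ring
  map_smul' c p := by simp [Prod.ext_iff, smul_eq_mul]; constructor <;> ring

/-- The two-dimensional representation of the dicyclic group attached to a character `χ`
of `ZMod (2 * n)`. -/
def qrep (n : ℕ) (χ : ZMod (2 * n) → ℂ)
    (hmul : ∀ i j, χ (i + j) = χ i * χ j) (h0 : χ 0 = 1) :
    Representation ℂ (QuaternionGroup n) (ℂ × ℂ) where
  toFun := fun g => match g with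
    | .a i => dia (χ i) (χ (-i))
    | .xa i => sw (χ (-i)) (χ ((n : ZMod (2 * n)) + i))
  map_one' := by
    show dia (χ 0) (χ (-0)) = 1
    apply LinearMap.ext; intro p
    simp [dia, h0, Prod.ext_iff]
  map_mul' := by
    have hnn : ((n : ZMod (2 * n)) : ZMod (2 * n)) + (n : ZMod (2 * n)) = 0 := by
      have h := ZMod.natCast_self (2 * n)
      push_cast at h
      linear_combination h
    rintro (i | i) (j | j)
    · show dia (χ (i + j)) (χ (-(i + j))) = _
      apply LinearMap.ext; intro p
      simp only [dia, Module.End.mul_apply, LinearMap.coe_mk, AddHom.coe_mk, Prod.ext_iff]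
      constructor
      · rw [hmul]; ring
      · rw [show -(i + j) = -i + -j by ring, hmul]; ring
    · show sw (χ (-(j - i))) (χ ((n : ZMod (2 * n)) + (j - i))) = _
      apply LinearMap.ext; intro p
      simp only [dia, sw, Module.End.mul_apply, LinearMap.coe_mk, AddHom.coe_mk, Prod.ext_iff]
      constructor
      · rw [show -(j - i) = i + -j by ring, hmul]; ring
      · rw [show (n : ZMod (2 * n)) + (j - i) = -i + ((n : ZMod (2 * n)) + j) by ring, hmul]; ring
    · show sw (χ (-(i + j))) (χ ((n : ZMod (2 * n)) + (i + j))) = _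
      apply LinearMap.ext; intro p
      simp only [dia, sw, Module.End.mul_apply, LinearMap.coe_mk, AddHom.coe_mk, Prod.ext_iff]
      constructor
      · rw [show -(i + j) = -i + -j by ring, hmul]; ring
      · rw [show (n : ZMod (2 * n)) + (i + j) = ((n : ZMod (2 * n)) + i) + j by ring, hmul]; ring
    · show dia (χ ((n : ZMod (2 * n)) + j - i)) (χ (-((n : ZMod (2 * n)) + j - i))) = _
      apply LinearMap.ext; intro p
      simp only [dia, sw, Module.End.mul_apply, LinearMap.coe_mk, AddHom.coe_mk, Prod.ext_iff]
      constructor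
      · rw [show (n : ZMod (2 * n)) + j - i = -i + ((n : ZMod (2 * n)) + j) by ring, hmul]; ring
      · rw [show -((n : ZMod (2 * n)) + j - i) = ((n : ZMod (2 * n)) + i) + -j by
          linear_combination -hnn, hmul]; ring

theorem qrep_a (n : ℕ) (χ : ZMod (2 * n) → ℂ)
    (hmul : ∀ i j, χ (i + j) = χ i * χ j) (h0 : χ 0 = 1) (i : ZMod (2 * n)) :
    qrep n χ hmul h0 (QuaternionGroup.a i) = dia (χ i) (χ (-i)) := rfl

theorem qrep_xa (n : ℕ) (χ : ZMod (2 * n) → ℂ)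
    (hmul : ∀ i j, χ (i + j) = χ i * χ j) (h0 : χ 0 = 1) (i : ZMod (2 * n)) :
    qrep n χ hmul h0 (QuaternionGroup.xa i) = sw (χ (-i)) (χ ((n : ZMod (2 * n)) + i)) := rfl

theorem qrep_simple (n : ℕ) (χ : ZMod (2 * n) → ℂ)
    (hmul : ∀ i j, χ (i + j) = χ i * χ j) (h0 : χ 0 = 1)
    (hne : χ 1 * χ 1 ≠ 1) (hn0 : ∀ k, χ k ≠ 0) :
    Simple (FDRep.of (qrep n χ hmul h0)) := by
  apply simple_of_irreducible
  · exact ⟨(1, 0), by simp [Prod.ext_iff]⟩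
  · intro U hU
    by_cases hbot : U = ⊥
    · exact Or.inl hbot
    right
    obtain ⟨⟨x, y⟩, hvU, hv0⟩ := (Submodule.ne_bot_iff U).mp hbot
    have hinv : χ (-1) * χ 1 = 1 := by
      rw [← hmul]; simpa using h0
    have hdiff : χ 1 - χ (-1) ≠ 0 := by
      intro hcon
      apply hne
      calc χ 1 * χ 1 = χ (-1) * χ 1 := by rw [(sub_eq_zero.mp hcon)]
        _ = 1 := hinv
    have key : ((1 : ℂ), (0 : ℂ)) ∈ U ∧ ((0 : ℂ), (1 : ℂ)) ∈ U := by
      have ha1 := hU (QuaternionGroup.a 1) _ hvU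
      rw [qrep_a] at ha1
      have hw : ((0 : ℂ), (χ 1 - χ (-1)) * y) ∈ U := by
        have hsub := U.sub_mem (U.smul_mem (χ 1) hvU) ha1
        have : χ 1 • ((x : ℂ), (y : ℂ)) - dia (χ 1) (χ (-1)) (x, y)
            = ((0 : ℂ), (χ 1 - χ (-1)) * y) := by
          simp [dia, Prod.ext_iff, smul_eq_mul]; ring
        rwa [this] at hsub
      by_cases hy : y = 0
      · have hx : x ≠ 0 := by
          intro hx; exact hv0 (by simp [hx, hy])
        have h1 : ((1 : ℂ), (0 : ℂ)) ∈ U := by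
          have hmem := U.smul_mem x⁻¹ hvU
          have hsmul : x⁻¹ • ((x : ℂ), (y : ℂ)) = ((1 : ℂ), (0 : ℂ)) := by
            rw [Prod.smul_mk, hy, smul_zero, smul_eq_mul, inv_mul_cancel₀ hx]
          rwa [hsmul] at hmem
        refine ⟨h1, ?_⟩
        have h2 := hU (QuaternionGroup.xa 0) _ h1
        rw [qrep_xa] at h2
        have h3 : ((0 : ℂ), χ ((n : ZMod (2 * n)))) ∈ U := by
          simpa [sw, h0] using h2
        have hmem := U.smul_mem (χ ((n : ZMod (2 * n))))⁻¹ h3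
        have hsmul : (χ ((n : ZMod (2 * n))))⁻¹ • ((0 : ℂ), χ ((n : ZMod (2 * n))))
            = ((0 : ℂ), (1 : ℂ)) := by
          rw [Prod.smul_mk, smul_zero, smul_eq_mul, inv_mul_cancel₀ (hn0 _)]
        rwa [hsmul] at hmem
      · have h01 : ((0 : ℂ), (1 : ℂ)) ∈ U := by
          have hmem := U.smul_mem ((χ 1 - χ (-1)) * y)⁻¹ hw
          have hsmul : ((χ 1 - χ (-1)) * y)⁻¹ • ((0 : ℂ), (χ 1 - χ (-1)) * y)
              = ((0 : ℂ), (1 : ℂ)) := by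
            rw [Prod.smul_mk, smul_zero, smul_eq_mul,
              inv_mul_cancel₀ (mul_ne_zero hdiff hy)]
          rwa [hsmul] at hmem
        refine ⟨?_, h01⟩
        have h2 := hU (QuaternionGroup.xa 0) _ h01
        rw [qrep_xa] at h2
        simpa [sw, h0] using h2
    rw [Submodule.eq_top_iff']
    intro p
    have := U.add_mem (U.smul_mem p.1 key.1) (U.smul_mem p.2 key.2)
    have hp : p.1 • ((1 : ℂ), (0 : ℂ)) + p.2 • ((0 : ℂ), (1 : ℂ)) = p := by
      simp [Prod.ext_iff, smul_eq_mul]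
    rwa [hp] at this

/-- The trivial representation (on `ℂ`) is simple. -/
theorem trivial_simple (G : Type) [Group G] :
    Simple (FDRep.of (Representation.trivial ℂ (G := G) (V := ℂ))) := by
  apply simple_of_irreducible
  · exact ⟨1, one_ne_zero⟩
  · intro U _
    by_cases hbot : U = ⊥
    · exact Or.inl hbot
    right
    obtain ⟨x, hxU, hx0⟩ := (Submodule.ne_bot_iff U).mp hbot
    rw [Submodule.eq_top_iff']
    intro z
    have := U.smul_mem (z * x⁻¹) hxU
    simpa [smul_eq_mul, mul_assoc, inv_mul_cancel₀ hx0] using this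


/-- If `H` acts trivially via `ρ`, the space of maps from the trivial `H`-rep to the
restriction of `ρ` is at least 2-dimensional. -/
theorem two_le_hom_finrank {G : Type} [Group G] (H : Subgroup G)
    (ρ : Representation ℂ G (ℂ × ℂ))
    (htriv : ∀ h : H, ρ ((h : G)) = LinearMap.id) :
    2 ≤ Module.finrank ℂ
      ((FDRep.of (Representation.trivial ℂ (G := H) (V := ℂ))) ⟶
        (Action.res (FGModuleCat ℂ) H.subtype).obj (FDRep.of ρ)) := by
  let Φ : (ℂ × ℂ) →ₗ[ℂ]
      ((FDRep.of (Representation.trivial ℂ (G := H) (V := ℂ))) ⟶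
        (Action.res (FGModuleCat ℂ) H.subtype).obj (FDRep.of ρ)) :=
    { toFun := fun v =>
        { hom := FGModuleCat.ofHom (LinearMap.toSpanSingleton ℂ (ℂ × ℂ) v)
          comm := by
            intro h
            apply ObjectProperty.hom_ext; apply ModuleCat.hom_ext; apply LinearMap.ext; intro z
            let h' : ↥H := h
            have hid : ρ ((h' : G)) = LinearMap.id := htriv h'
            show LinearMap.toSpanSingleton ℂ (ℂ × ℂ) v z
              = ρ ((h' : G)) (LinearMap.toSpanSingleton ℂ (ℂ × ℂ) v z)
            rw [hid]
            rfl }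
      map_add' := by
        intro v w
        apply Action.hom_ext
        show FGModuleCat.ofHom (LinearMap.toSpanSingleton ℂ (ℂ × ℂ) (v + w))
            = FGModuleCat.ofHom (LinearMap.toSpanSingleton ℂ (ℂ × ℂ) v) + FGModuleCat.ofHom (LinearMap.toSpanSingleton ℂ (ℂ × ℂ) w)
        apply ObjectProperty.hom_ext; apply ModuleCat.hom_ext; apply LinearMap.ext; intro z
        show z • (v + w) = z • v + z • w
        exact smul_add z v w
      map_smul' := by
        intro a v
        apply Action.hom_ext
        show FGModuleCat.ofHom (LinearMap.toSpanSingleton ℂ (ℂ × ℂ) (a • v))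
            = a • FGModuleCat.ofHom (LinearMap.toSpanSingleton ℂ (ℂ × ℂ) v)
        apply ObjectProperty.hom_ext; apply ModuleCat.hom_ext; apply LinearMap.ext; intro z
        show z • (a • v) = a • (z • v)
        exact smul_comm z a v }
  have hΦinj : Function.Injective Φ := by
    intro v w hvw
    have h1 := congrArg (fun φ :
        ((FDRep.of (Representation.trivial ℂ (G := H) (V := ℂ))) ⟶
          (Action.res (FGModuleCat ℂ) H.subtype).obj (FDRep.of ρ)) =>
      φ.hom (1 : ℂ)) hvw
    have h2 : (1 : ℂ) • v = (1 : ℂ) • w := h1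
    simpa using h2
  have hle := LinearMap.finrank_le_finrank_of_injective hΦinj
  have h2 : Module.finrank ℂ (ℂ × ℂ) = 2 := by
    simp [Module.finrank_prod]
  omega

end SGPAux

set_option maxHeartbeats 1000000 in
open SGPAux QuaternionGroup in
/-- Theorem 2 (dicyclic): for `n ≥ 2`, every strong Gelfand subgroup `H` of the
dicyclic group `Dic_{4n}` is (i) a subgroup of the form `⟨b a^i⟩`, (ii) a dicyclic
subgroup (one containing an element `b a^i`), or (iii) cyclic of order `n` or `2n`,
namely `⟨a²⟩` or `⟨a⟩`. -/
theorem strong_gelfand_pairs_of_dicyclic (n : ℕ) (hn : 2 ≤ n)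
    (H : Subgroup (QuaternionGroup n))
    (hH : IsStrongGelfandPair (QuaternionGroup n) H) :
    (∃ i : ZMod (2 * n), H = Subgroup.zpowers (QuaternionGroup.xa i)) ∨
    (∃ i : ZMod (2 * n), QuaternionGroup.xa i ∈ H) ∨
    H = Subgroup.zpowers (QuaternionGroup.a 1 ^ 2) ∨
    H = Subgroup.zpowers (QuaternionGroup.a 1) := by
  haveI : NeZero n := ⟨by omega⟩
  by_cases hxa : ∃ i : ZMod (2 * n), QuaternionGroup.xa i ∈ H
  · exact Or.inr (Or.inl hxa)
  have hAle : H ≤ Subgroup.zpowers (QuaternionGroup.a 1) := by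
    intro h hh
    cases h with
    | a k =>
      refine Subgroup.mem_zpowers_iff.mpr ⟨(k.val : ℤ), ?_⟩
      rw [zpow_natCast, a_one_pow, ZMod.natCast_zmod_val]
    | xa k => exact absurd ⟨k, hh⟩ hxa
  -- every element of `H` raised to `Nat.card H` is trivial; elements are of the form `a k`
  have hpow_mem : ∀ k : ZMod (2 * n), QuaternionGroup.a k ∈ H →
      (2 * n) ∣ k.val * Nat.card H := by
    intro k hk
    have h1 : (QuaternionGroup.a k) ^ (Nat.card H) = 1 := by
      have h1' : ((⟨QuaternionGroup.a k, hk⟩ : H) ^ (Nat.card H) : H) = 1 :=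
        pow_card_eq_one'
      have h1'' : ((⟨QuaternionGroup.a k, hk⟩ : H) : QuaternionGroup n) ^ (Nat.card H)
          = 1 := by
        rw [← Subgroup.coe_pow, h1', OneMemClass.coe_one]
      exact h1''
    have h2 : QuaternionGroup.a ((k.val * Nat.card H : ℕ) : ZMod (2 * n)) = 1 := by
      rw [← a_one_pow, pow_mul, a_one_pow, ZMod.natCast_zmod_val]
      exact h1
    rw [one_def] at h2
    have h3 : ((k.val * Nat.card H : ℕ) : ZMod (2 * n)) = 0 := by
      injection h2
    exact (ZMod.natCast_eq_zero_iff _ _).mp h3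
  have hcd : Nat.card H ∣ 2 * n := by
    have := Subgroup.card_dvd_of_le hAle
    rwa [Nat.card_zpowers, orderOf_a_one] at this
  have hcpos : 0 < Nat.card H := Nat.card_pos
  by_cases hc2n : Nat.card H = 2 * n
  · refine Or.inr (Or.inr (Or.inr ?_))
    apply Subgroup.eq_of_le_of_card_ge hAle
    rw [Nat.card_zpowers, orderOf_a_one, hc2n]
  by_cases hcn : Nat.card H = n
  · refine Or.inr (Or.inr (Or.inl ?_))
    have hle2 : H ≤ Subgroup.zpowers (QuaternionGroup.a 1 ^ 2) := by
      intro h hh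
      cases h with
      | xa k => exact absurd ⟨k, hh⟩ hxa
      | a k =>
        have hdvd := hpow_mem k hh
        rw [hcn] at hdvd
        have h2 : 2 ∣ k.val := by
          obtain ⟨t, ht⟩ := hdvd
          have hn0 : 0 < n := by omega
          have : k.val = 2 * t := by
            have : k.val * n = (2 * t) * n := by rw [ht]; ring
            exact Nat.eq_of_mul_eq_mul_right hn0 this
          exact ⟨t, this⟩
        obtain ⟨m, hm⟩ := h2
        refine Subgroup.mem_zpowers_iff.mpr ⟨(m : ℤ), ?_⟩
        rw [zpow_natCast, ← pow_mul, a_one_pow]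
        congr 1
        rw [show 2 * m = k.val from hm.symm, ZMod.natCast_zmod_val]
    apply Subgroup.eq_of_le_of_card_ge hle2
    have ho : orderOf (QuaternionGroup.a 1 ^ 2 : QuaternionGroup n) = n := by
      rw [orderOf_pow, orderOf_a_one, Nat.gcd_comm, Nat.gcd_eq_left ⟨n, rfl⟩]
      omega
    rw [Nat.card_zpowers, ho, hcn]
  -- remaining case: Nat.card H < n; derive a contradiction with the strong Gelfand property
  exfalso
  set c := Nat.card H with hc
  have hclt : c < n := by
    obtain ⟨k, hk⟩ := hcd
    have hk3 : 3 ≤ k := by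
      by_contra hk3
      interval_cases k <;> omega
    have : c * 3 ≤ c * k := Nat.mul_le_mul_left c hk3
    omega
  -- the character χ of ZMod (2n)
  obtain ⟨ω, hω⟩ : ∃ ω : ℂ, IsPrimitiveRoot ω (2 * n) :=
    ⟨_, Complex.isPrimitiveRoot_exp (2 * n) (by omega)⟩
  have hωpow : ω ^ (2 * n) = 1 := hω.pow_eq_one
  have hmod : ∀ s t : ℕ, s ≡ t [MOD 2 * n] → ω ^ s = ω ^ t := by
    have haux : ∀ s : ℕ, ω ^ s = ω ^ (s % (2 * n)) := by
      intro s
      conv_lhs => rw [← Nat.mod_add_div s (2 * n)]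
      rw [pow_add, pow_mul, hωpow, one_pow, mul_one]
    intro s t hst
    rw [haux s, haux t]
    exact congrArg (fun m => ω ^ m) hst
  set χ : ZMod (2 * n) → ℂ := fun k => ω ^ (c * k.val) with hχ_def
  have hmul : ∀ i j, χ (i + j) = χ i * χ j := by
    intro i j
    rw [hχ_def]
    simp only
    rw [← pow_add]
    apply hmod
    rw [ZMod.val_add, ← mul_add]
    exact Nat.ModEq.mul_left c (Nat.mod_modEq _ _)
  have h0 : χ 0 = 1 := by
    rw [hχ_def]; simp
  have hn0 : ∀ k, χ k ≠ 0 := by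
    intro k
    exact pow_ne_zero _ (hω.ne_zero (by omega))
  haveI hfact : Fact (1 < 2 * n) := ⟨by omega⟩
  have hne : χ 1 * χ 1 ≠ 1 := by
    have hχ1 : χ 1 = ω ^ c := by
      show ω ^ (c * (1 : ZMod (2 * n)).val) = ω ^ c
      rw [ZMod.val_one, mul_one]
    rw [hχ1, ← pow_add]
    apply hω.pow_ne_one_of_pos_of_lt <;> omega
  have hker : ∀ k : ZMod (2 * n), QuaternionGroup.a k ∈ H → χ k = 1 := by
    intro k hk
    have hd : (2 * n) ∣ c * k.val := by
      have h := hpow_mem k hk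
      rwa [Nat.mul_comm k.val c] at h
    exact (hω.pow_eq_one_iff_dvd (c * k.val)).mpr hd
  -- the representations
  have hVs : Simple (FDRep.of (qrep n χ hmul h0)) := qrep_simple n χ hmul h0 hne hn0
  have hWs : Simple (FDRep.of (Representation.trivial ℂ (G := ↥H) (V := ℂ))) :=
    trivial_simple ↥H
  have htriv : ∀ h : H, qrep n χ hmul h0 ((h : QuaternionGroup n)) = LinearMap.id := by
    rintro ⟨h, hh⟩
    cases h with
    | xa k => exact absurd ⟨k, hh⟩ hxa
    | a k =>
      have h1 : χ k = 1 := hker k hh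
      have h2 : χ (-k) = 1 := by
        have h3 : χ (-k) * χ k = 1 := by rw [← hmul]; simpa using h0
        rw [h1, mul_one] at h3
        exact h3
      show qrep n χ hmul h0 (QuaternionGroup.a k) = LinearMap.id
      rw [qrep_a, h1, h2]
      apply LinearMap.ext; intro p
      simp [dia, Prod.ext_iff]
  have h2le := two_le_hom_finrank H (qrep n χ hmul h0) htriv
  have h1le := hH (FDRep.of (qrep n χ hmul h0))
    (FDRep.of (Representation.trivial ℂ (G := ↥H) (V := ℂ))) hVs hWs
  omega
end

section
/- For every n ≥ 1 and every i, the pair (D_{2n}, ⟨ba^i⟩) is a strong Gelfand pair, where ⟨ba^i⟩ is the order-2 subgroup of D_{2n} generated by the reflection ba^i. -/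
open CategoryTheory

section Aux

variable {k G : Type} [Field k] [Group G]

/-- The subrepresentation on an invariant submodule. -/
noncomputable def subRep (W : FDRep k G) (p : Submodule k W)
    (hp : ∀ g : G, ∀ x ∈ p, W.ρ g x ∈ p) : Representation k G p where
  toFun g := (W.ρ g).restrict (hp g)
  map_one' := by ext x; simp
  map_mul' g h := by ext x; simp

lemma invariant_eq_bot_or_top (W : FDRep k G) [Simple W] (p : Submodule k W)
    (hp : ∀ g : G, ∀ x ∈ p, W.ρ g x ∈ p) : p = ⊥ ∨ p = ⊤ := by
  by_cases hb : p = ⊥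
  · exact Or.inl hb
  right
  obtain ⟨x, hx, hx0⟩ := Submodule.exists_mem_ne_zero_of_ne_bot hb
  let Wp : FDRep k G := FDRep.of (subRep W p hp)
  let f : Wp ⟶ W := ⟨FGModuleCat.ofHom p.subtype, fun g => rfl⟩
  have hmono : Mono f := by
    apply ConcreteCategory.mono_of_injective
    exact Subtype.val_injective
  have hne : f ≠ 0 := by
    intro h
    have : f.hom (⟨x, hx⟩ : p) = (0 : Wp ⟶ W).hom (⟨x, hx⟩ : p) := by rw [h]
    simp only [Action.zero_hom] at this
    exact hx0 this
  have : IsIso f := isIso_of_mono_of_nonzero hne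
  have hsurj : Function.Surjective (p.subtype) := by
    intro w
    have h2 : ((inv f) ≫ f).hom w = w := by rw [IsIso.inv_hom_id]; rfl
    exact ⟨(inv f).hom w, h2⟩
  rw [Submodule.eq_top_iff']
  intro w
  obtain ⟨y, hy⟩ := hsurj w
  exact hy ▸ y.2

lemma nontrivial_of_simple (W : FDRep k G) [Simple W] : Nontrivial W := by
  by_contra h
  have hss : Subsingleton W := not_nontrivial_iff_subsingleton.mp h
  apply Simple.not_isZero W
  rw [Limits.IsZero.iff_id_eq_zero]
  apply Action.hom_ext
  apply ConcreteCategory.hom_ext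
  intro x
  exact @Subsingleton.elim _ hss _ _

lemma pow_apply_eig {V : Type} [AddCommGroup V] [Module k V] (f : V →ₗ[k] V) (c : k) (v : V)
    (h : f v = c • v) (m : ℕ) : (f ^ m) v = c ^ m • v := by
  induction m with
  | zero => simp
  | succ m ih =>
    rw [pow_succ, pow_succ, Module.End.mul_apply, h, map_smul, ih, smul_smul, mul_comm]

end Aux

section Dihedral

open DihedralGroup Module

variable {n : ℕ} [NeZero n]

lemma rho_r_eq (V : FDRep ℂ (DihedralGroup n)) {lam : ℂ} {v : V}
    (h : V.ρ (r 1) v = lam • v) (j : ZMod n) : V.ρ (r j) v = lam ^ j.val • v := by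
  have : r j = (r 1 : DihedralGroup n) ^ j.val := by
    rw [r_one_pow, ZMod.natCast_rightInverse j]
  rw [this, map_pow]
  exact pow_apply_eig _ _ _ h _

lemma rho_sr_eq (V : FDRep ℂ (DihedralGroup n)) {lam : ℂ} {v : V}
    (h : V.ρ (r 1) v = lam • v) (i j : ZMod n) :
    V.ρ (sr j) v = lam ^ ((j - i).val) • V.ρ (sr i) v := by
  have hj : sr j = sr i * r (j - i) := by rw [sr_mul_r]; ring_nf
  rw [hj, map_mul, Module.End.mul_apply, rho_r_eq V h, map_smul]

/-- The key dihedral fact: every eigenspace of a reflection in a simple rep has dim ≤ 1. -/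
lemma eigenspace_reflection_le_one (V : FDRep ℂ (DihedralGroup n)) [Simple V]
    (i : ZMod n) (μ : ℂ) :
    finrank ℂ (Module.End.eigenspace (V.ρ (sr i) : Module.End ℂ V) μ) ≤ 1 := by
  classical
  have hnt : Nontrivial V := nontrivial_of_simple V
  -- dim V ≤ 2
  obtain ⟨lam, hlam⟩ := Module.End.exists_eigenvalue (V.ρ (r 1) : Module.End ℂ V)
  obtain ⟨v, hv⟩ := hlam.exists_hasEigenvector
  have hveq : V.ρ (r 1) v = lam • v := hv.apply_eq_smul
  have hv0 : v ≠ 0 := hv.right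
  set w : V := V.ρ (sr i) v with hw
  have hU2 : finrank ℂ V ≤ 2 := by
    set U : Submodule ℂ V := Submodule.span ℂ {v, w} with hUdef
    have hvU : v ∈ U := Submodule.subset_span (by simp)
    have hwU : w ∈ U := Submodule.subset_span (by simp)
    have hbase : ∀ g : DihedralGroup n, V.ρ g v ∈ U ∧ V.ρ g w ∈ U := by
      rintro (j | j)
      · constructor
        · rw [rho_r_eq V hveq]; exact U.smul_mem _ hvU
        · have : V.ρ (r j) w = V.ρ (r j * sr i) v := by
            rw [map_mul, Module.End.mul_apply]
          rw [this, r_mul_sr, rho_sr_eq V hveq i]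
          exact U.smul_mem _ hwU
      · constructor
        · rw [rho_sr_eq V hveq i]; exact U.smul_mem _ hwU
        · have : V.ρ (sr j) w = V.ρ (sr j * sr i) v := by
            rw [map_mul, Module.End.mul_apply]
          rw [this, sr_mul_sr, rho_r_eq V hveq]
          exact U.smul_mem _ hvU
    have hinv : ∀ g : DihedralGroup n, ∀ x ∈ U, V.ρ g x ∈ U := by
      intro g x hxU
      induction hxU using Submodule.span_induction with
      | mem y hy =>
        rcases hy with hy | hy
        · exact hy ▸ (hbase g).1
        · simp only [Set.mem_singleton_iff] at hy
          exact hy ▸ (hbase g).2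
      | zero => simp
      | add a b _ _ ha hb => rw [map_add]; exact U.add_mem ha hb
      | smul c a _ ha => rw [map_smul]; exact U.smul_mem _ ha
    have hUtop : U = ⊤ := by
      rcases invariant_eq_bot_or_top V U hinv with h | h
      · exact absurd (h ▸ hvU) (by simpa using hv0)
      · exact h
    have heq : finrank ℂ V = finrank ℂ U := by rw [hUtop]; exact (finrank_top ℂ V).symm
    rw [heq]
    have h1 : U = Submodule.span ℂ ((({v, w} : Finset V) : Set V)) := by
      rw [hUdef]; congr 1; simp
    calc finrank ℂ U = Set.finrank ℂ (({v, w} : Finset V) : Set V) := by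
          rw [Set.finrank, ← h1]
      _ ≤ ({v, w} : Finset V).card := finrank_span_finset_le_card _
      _ ≤ 2 := (Finset.card_insert_le _ _).trans (by simp)
  -- now the eigenspace
  set E := Module.End.eigenspace (V.ρ (sr i) : Module.End ℂ V) μ with hE
  by_contra hgt
  push_neg at hgt
  have hE2 : 2 ≤ finrank ℂ E := hgt
  have hEV : finrank ℂ E ≤ finrank ℂ V := E.finrank_le
  have hEeq : finrank ℂ E = finrank ℂ V := le_antisymm hEV (le_trans hU2 hE2)
  have hEtop : E = ⊤ := Submodule.eq_top_of_finrank_eq hEeq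
  have hscalar : ∀ x : V, V.ρ (sr i) x = μ • x := by
    intro x
    have : x ∈ E := hEtop ▸ Submodule.mem_top
    rwa [hE, Module.End.mem_eigenspace_iff] at this
  -- span of single eigenvector is invariant → dim V = 1, contradiction
  obtain ⟨u⟩ : Nonempty {u : V // V.ρ (r 1) u = lam • u ∧ u ≠ 0} := ⟨⟨v, hveq, hv0⟩⟩
  obtain ⟨u, hueq, hu0⟩ := u
  set P : Submodule ℂ V := Submodule.span ℂ {u} with hP
  have huP : u ∈ P := Submodule.mem_span_singleton_self u
  have hinvP : ∀ g : DihedralGroup n, ∀ x ∈ P, V.ρ g x ∈ P := by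
    have hbase : ∀ g : DihedralGroup n, V.ρ g u ∈ P := by
      rintro (j | j)
      · rw [rho_r_eq V hueq]; exact P.smul_mem _ huP
      · rw [rho_sr_eq V hueq i, hscalar]
        exact P.smul_mem _ (P.smul_mem _ huP)
    intro g x hxP
    rw [Submodule.mem_span_singleton] at hxP
    obtain ⟨c, rfl⟩ := hxP
    rw [map_smul]
    exact P.smul_mem _ (hbase g)
  have hPtop : P = ⊤ := by
    rcases invariant_eq_bot_or_top V P hinvP with h | h
    · exact absurd (h ▸ huP) (by simpa using hu0)
    · exact h
  have h1 : finrank ℂ V = 1 := by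
    rw [← finrank_top ℂ V, ← hPtop, hP, finrank_span_singleton hu0]
  omega

end Dihedral

lemma main_aux {n : ℕ} [NeZero n] (i : ZMod n)
    (V : FDRep ℂ (DihedralGroup n))
    (W : FDRep ℂ (Subgroup.zpowers (DihedralGroup.sr i)))
    [Simple V] [Simple W] :
    Module.finrank ℂ (W ⟶ (Action.res (FGModuleCat ℂ)
      ((Subgroup.zpowers (DihedralGroup.sr i)).subtype)).obj V) ≤ 1 := by
  have hsH : DihedralGroup.sr i ∈ Subgroup.zpowers (DihedralGroup.sr i) :=
    Subgroup.mem_zpowers _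
  let s : Subgroup.zpowers (DihedralGroup.sr i) := ⟨DihedralGroup.sr i, hsH⟩
  have hntW : Nontrivial W := nontrivial_of_simple W
  obtain ⟨μ, hμ⟩ := Module.End.exists_eigenvalue (W.ρ s : Module.End ℂ W)
  obtain ⟨w₀, hw₀⟩ := hμ.exists_hasEigenvector
  have hw₀eq : W.ρ s w₀ = μ • w₀ := hw₀.apply_eq_smul
  have hw₀0 : w₀ ≠ 0 := hw₀.right
  set X := (Action.res (FGModuleCat ℂ)
    ((Subgroup.zpowers (DihedralGroup.sr i)).subtype)).obj V with hXdef
  set E := Module.End.eigenspace (V.ρ (DihedralGroup.sr i) : Module.End ℂ V) μ with hEdef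
  have hcomm : ∀ (f : W ⟶ X) (h : Subgroup.zpowers (DihedralGroup.sr i)) (x : W),
      f.hom (W.ρ h x) = V.ρ (h : DihedralGroup n) (f.hom x) := by
    intro f h x
    exact congrArg (fun g => g x) (f.comm h)
  have hmem : ∀ f : W ⟶ X, f.hom w₀ ∈ E := by
    intro f
    have h1 := hcomm f s w₀
    rw [hw₀eq, map_smul] at h1
    rw [hEdef]
    exact (Module.End.mem_eigenspace_iff (M := V) (f := V.ρ (DihedralGroup.sr i)) (x := (show V from f.hom w₀))).mpr h1.symm
  let Φ : (W ⟶ X) →ₗ[ℂ] E :=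
    { toFun := fun f => ⟨f.hom w₀, hmem f⟩
      map_add' := fun f g => by
        apply Subtype.ext
        show ((f + g).hom.hom.hom : W →ₗ[ℂ] X) w₀ = f.hom w₀ + g.hom w₀
        rw [Action.add_hom]
        rfl
      map_smul' := fun c f => by
        apply Subtype.ext
        show ((c • f).hom.hom.hom : W →ₗ[ℂ] X) w₀ = c • (f.hom w₀)
        rw [Action.smul_hom]
        rfl }
  have hΦinj : Function.Injective Φ := by
    rw [← LinearMap.ker_eq_bot, eq_bot_iff]
    intro f hf
    simp only [LinearMap.mem_ker] at hf
    have hf0 : f.hom w₀ = 0 := congrArg Subtype.val hf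
    have hker : ∀ h : Subgroup.zpowers (DihedralGroup.sr i),
        ∀ x ∈ LinearMap.ker (f.hom.hom.hom : W →ₗ[ℂ] X),
        W.ρ h x ∈ LinearMap.ker (f.hom.hom.hom : W →ₗ[ℂ] X) := by
      intro h x hx
      rw [LinearMap.mem_ker] at hx ⊢
      exact (hcomm f h x).trans (by rw [show f.hom x = 0 from hx]; exact map_zero _)
    rcases invariant_eq_bot_or_top W _ hker with h | h
    · exact absurd (h ▸ (LinearMap.mem_ker.mpr hf0)) (by simpa using hw₀0)
    · have h0 : (f.hom.hom.hom : W →ₗ[ℂ] X) = 0 := LinearMap.ker_eq_top.mp h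
      show f ∈ (⊥ : Submodule ℂ (W ⟶ X))
      rw [Submodule.mem_bot]
      exact Action.hom_ext f 0 (by ext x; exact LinearMap.congr_fun h0 x)
  calc Module.finrank ℂ (W ⟶ X) ≤ Module.finrank ℂ E :=
        LinearMap.finrank_le_finrank_of_injective hΦinj
    _ ≤ 1 := eigenspace_reflection_le_one V i μ

/-- For every `n ≥ 1` and every `i`, the pair `(D_{2n}, ⟨b a^i⟩)` is a strong
Gelfand pair, where `b a^i` is the reflection `sr i`. -/
theorem isStrongGelfandPair_dihedral_reflection (n : ℕ) (hn : 1 ≤ n) (i : ZMod n) :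
    IsStrongGelfandPair (DihedralGroup n)
      (Subgroup.zpowers (DihedralGroup.sr i)) := by
  have : NeZero n := ⟨by omega⟩
  intro V W hV hW
  exact @main_aux n this i V W hV hW
end

section
/- Let n ≥ 3 be odd and let m be a divisor of n with 1 < m < n. Then the pair (D_{2n}, ⟨a^{n/m}⟩), where ⟨a^{n/m}⟩ is the cyclic subgroup of order m of the rotation subgroup of D_{2n}, is not a strong Gelfand pair. Consequently, for n odd, no proper subgroup of ⟨a⟩ other than the trivial group fails to be covered: no proper nontrivial subgroup of ⟨a⟩ ≤ D_{2n} is a strong Gelfand subgroup. -/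
open CategoryTheory

open CategoryTheory
suppress_compilation
section
variable {G : Type} [Group G]

lemma fdrep_hom_comm_apply {Y V : FDRep ℂ G} (f : Y ⟶ V) (g : G) (y : Y) :
    f.hom (Y.ρ g y) = V.ρ g (f.hom y) :=
  congrFun (congrArg (fun φ : Y.V ⟶ V.V => (φ : Y.V.obj → V.V.obj)) (f.comm g)) y

def invSubrep (V : FDRep ℂ G) (p : Submodule ℂ V)
    (hp : ∀ g : G, ∀ x ∈ p, V.ρ g x ∈ p) : FDRep ℂ G :=
  FDRep.of (V := p)
    { toFun := fun g => (V.ρ g).restrict (hp g)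
      map_one' := by ext x; simp [LinearMap.restrict_apply]
      map_mul' := fun g h => by ext x; simp [LinearMap.restrict_apply] }

def invSubrepIncl (V : FDRep ℂ G) (p : Submodule ℂ V)
    (hp : ∀ g : G, ∀ x ∈ p, V.ρ g x ∈ p) : invSubrep V p hp ⟶ V where
  hom := FGModuleCat.ofHom p.subtype
  comm g := by ext x; rfl

lemma simple_of_invariant (V : FDRep ℂ G) (hV : Nontrivial V)
    (h : ∀ p : Submodule ℂ V, (∀ g : G, ∀ x ∈ p, V.ρ g x ∈ p) → p = ⊥ ∨ p = ⊤) :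
    Simple V := by
  constructor
  intro Y f hf
  constructor
  · intro hiso h0
    subst h0
    have hid : (𝟙 V : V ⟶ V) = 0 := by
      rw [← IsIso.inv_hom_id (0 : Y ⟶ V), Limits.comp_zero]
    obtain ⟨v, w, hvw⟩ := hV
    apply hvw
    have h2 := congrArg Action.Hom.hom hid
    rw [Action.zero_hom] at h2
    calc v = (𝟙 V : V ⟶ V).hom.hom.hom v := rfl
    _ = (0 : V.V ⟶ V.V) v := by rw [h2]; rfl
    _ = (0 : V →ₗ[ℂ] V) v := rfl
    _ = (0 : V →ₗ[ℂ] V) w := by simp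
    _ = (0 : V.V ⟶ V.V) w := rfl
    _ = (𝟙 V : V ⟶ V).hom.hom.hom w := by rw [h2]; rfl
    _ = w := rfl
  · intro hne
    have hinj : Function.Injective f.hom.hom.hom := by
      rw [← LinearMap.ker_eq_bot]
      by_contra hker
      have hkinv : ∀ g : G, ∀ x ∈ LinearMap.ker f.hom.hom.hom,
          Y.ρ g x ∈ LinearMap.ker f.hom.hom.hom := by
        intro g x hx
        simp only [LinearMap.mem_ker] at hx ⊢
        show f.hom (Y.ρ g x) = 0
        exact (fdrep_hom_comm_apply f g x).trans
          (by show V.ρ g (f.hom x) = 0; rw [show f.hom x = (0 : V.V.obj) from hx, map_zero])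
      set K := LinearMap.ker f.hom.hom.hom
      have hcomp : invSubrepIncl Y K hkinv ≫ f = (0 : invSubrep Y K hkinv ⟶ V) := by
        apply Action.Hom.ext
        ext x
        exact x.2
      have h0 : invSubrepIncl Y K hkinv = (0 : invSubrep Y K hkinv ⟶ Y) := by
        rw [← cancel_mono f, hcomp, Limits.zero_comp]
      apply hker
      rw [Submodule.eq_bot_iff]
      intro x hx
      have h2 := congrArg Action.Hom.hom h0
      rw [Action.zero_hom] at h2
      exact congrFun (congrArg (fun φ : (invSubrep Y K hkinv).V ⟶ Y.V =>
        (φ.hom.hom : (invSubrep Y K hkinv).V → Y.V)) h2)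
        (⟨x, hx⟩ : K)
    have hsurj : Function.Surjective f.hom.hom.hom := by
      have hrinv : ∀ g : G, ∀ x ∈ LinearMap.range f.hom.hom.hom,
          V.ρ g x ∈ LinearMap.range f.hom.hom.hom := by
        rintro g x ⟨y, rfl⟩
        exact ⟨Y.ρ g y, fdrep_hom_comm_apply f g y⟩
      rcases h _ hrinv with hb | ht
      · exfalso; apply hne
        apply Action.Hom.ext
        rw [Action.zero_hom]
        ext y
        exact (Submodule.mem_bot ℂ).mp (hb ▸ LinearMap.mem_range_self f.hom.hom.hom y)
      · rw [← LinearMap.range_eq_top]; exact ht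
    let e : Y ≃ₗ[ℂ] V := LinearEquiv.ofBijective f.hom.hom.hom ⟨hinj, hsurj⟩
    have he : ∀ y : Y, e y = f.hom.hom.hom y := fun _ => rfl
    refine ⟨⟨⟨FGModuleCat.ofHom (e.symm : V →ₗ[ℂ] Y), ?_⟩, ?_, ?_⟩⟩
    · intro g
      ext v
      show e.symm (V.ρ g v) = Y.ρ g (e.symm v)
      apply e.injective
      calc e (e.symm (V.ρ g v)) = V.ρ g v := e.apply_symm_apply _
      _ = V.ρ g (e (e.symm v)) := by rw [e.apply_symm_apply]
      _ = V.ρ g (f.hom.hom.hom (e.symm v)) := rfl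
      _ = f.hom (Y.ρ g (e.symm v)) := (fdrep_hom_comm_apply f g _).symm
      _ = e (Y.ρ g (e.symm v)) := rfl
    · apply Action.Hom.ext; ext y
      show e.symm (e y) = y
      exact e.symm_apply_apply y
    · apply Action.Hom.ext; ext v
      show e (e.symm v) = v
      exact e.apply_symm_apply v
end

open DihedralGroup

section Construction
variable (n m : ℕ) [NeZero n]

/-- the unit `exp(2πi m/n)` -/
noncomputable def sgw : ℂˣ :=
  ((Complex.isPrimitiveRoot_exp n (NeZero.ne n)).isUnit (NeZero.ne n)).unit ^ m

lemma sgw_pow_n : sgw n m ^ n = 1 := by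
  have h := (Complex.isPrimitiveRoot_exp n (NeZero.ne n)).pow_eq_one
  apply Units.ext
  rw [sgw, Units.val_pow_eq_pow_val, Units.val_pow_eq_pow_val, IsUnit.unit_spec,
    ← pow_mul, mul_comm m n, pow_mul, h, one_pow, Units.val_one]

lemma sgw_sq_ne_one (hodd : Odd n) (hm0 : 0 < m) (hmn : m < n) : sgw n m ^ 2 ≠ 1 := by
  intro h
  have hprim := Complex.isPrimitiveRoot_exp n (NeZero.ne n)
  have : (Complex.exp (2 * Real.pi * Complex.I / n)) ^ (m * 2) = 1 := by
    have := congrArg (Units.val) h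
    rw [sgw, ← pow_mul] at this
    simpa [Units.val_pow_eq_pow_val] using this
  have hdvd : n ∣ m * 2 := (hprim.pow_eq_one_iff_dvd _).mp this
  have : n ∣ m := Nat.Coprime.dvd_of_dvd_mul_right (Odd.coprime_two_right hodd) hdvd
  exact absurd (Nat.le_of_dvd hm0 this) (by omega)

/-- the character value `c j = w^(j.val)` -/
noncomputable def sgc (j : ZMod n) : ℂˣ := sgw n m ^ j.val

lemma sgc_add (i j : ZMod n) : sgc n m (i + j) = sgc n m i * sgc n m j := by
  have key : ∀ a : ℕ, sgw n m ^ a = sgw n m ^ (a % n) := by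
    intro a
    conv_lhs => rw [← Nat.div_add_mod a n]
    rw [pow_add, pow_mul, sgw_pow_n, one_pow, one_mul]
  rw [sgc, sgc, sgc, ← pow_add, ZMod.val_add, ← key]

lemma sgc_zero : sgc n m 0 = 1 := by
  simp [sgc, ZMod.val_zero]

lemma sgc_neg (j : ZMod n) : sgc n m (-j) = (sgc n m j)⁻¹ := by
  have : sgc n m j * sgc n m (-j) = 1 := by
    rw [← sgc_add]; simp [sgc_zero]
  exact (inv_eq_of_mul_eq_one_right this).symm

lemma sgc_sub (i j : ZMod n) : sgc n m (i - j) = sgc n m i * (sgc n m j)⁻¹ := by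
  rw [sub_eq_add_neg, sgc_add, sgc_neg]

lemma sgc_one_eq : sgc n m 1 = sgw n m ∨ n = 1 := by
  rcases eq_or_ne n 1 with h | h
  · exact Or.inr h
  · left
    rw [sgc, ZMod.val_one_eq_one_mod]
    rw [Nat.one_mod_eq_one.mpr h, pow_one]

/-- matrix of the representation -/
noncomputable def sgM : DihedralGroup n → Matrix (Fin 2) (Fin 2) ℂ
  | r j => !![(sgc n m j : ℂ), 0; 0, ((sgc n m j)⁻¹ : ℂˣ)]
  | sr j => !![0, ((sgc n m j)⁻¹ : ℂˣ); (sgc n m j : ℂ), 0]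

lemma sgM_one : sgM n m 1 = 1 := by
  show sgM n m (r 0) = 1
  simp [sgM, sgc_zero, Matrix.one_fin_two]

lemma sgM_mul (g h : DihedralGroup n) : sgM n m (g * h) = sgM n m g * sgM n m h := by
  cases g with
  | r i => cases h with
    | r j => simp [sgM, r_mul_r, sgc_add, Matrix.mul_fin_two, mul_comm]
    | sr j => simp [sgM, r_mul_sr, sgc_sub, Matrix.mul_fin_two, mul_comm]
  | sr i => cases h with
    | r j => simp [sgM, sr_mul_r, sgc_add, Matrix.mul_fin_two, mul_comm]
    | sr j => simp [sgM, sr_mul_sr, sgc_sub, Matrix.mul_fin_two, mul_comm]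

/-- the 2-dimensional representation of the dihedral group -/
noncomputable def sgRep : Representation ℂ (DihedralGroup n) (Fin 2 → ℂ) where
  toFun g := Matrix.toLin' (sgM n m g)
  map_one' := by
    show Matrix.toLin' (sgM n m 1) = _
    rw [sgM_one, Matrix.toLin'_one]; rfl
  map_mul' g h := by
    show Matrix.toLin' (sgM n m (g * h)) = _
    rw [sgM_mul, Matrix.toLin'_mul]; rfl

lemma sgRep_r_apply (j : ZMod n) (x : Fin 2 → ℂ) :
    sgRep n m (r j) x = ![(sgc n m j : ℂ) * x 0, ((sgc n m j)⁻¹ : ℂˣ) * x 1] := by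
  funext i
  fin_cases i <;>
    simp [sgRep, sgM, Matrix.toLin'_apply, Matrix.mulVec, dotProduct, Fin.sum_univ_two, Matrix.vecHead, Matrix.vecTail]

lemma sgRep_sr_apply (j : ZMod n) (x : Fin 2 → ℂ) :
    sgRep n m (sr j) x = ![((sgc n m j)⁻¹ : ℂˣ) * x 1, (sgc n m j : ℂ) * x 0] := by
  funext i
  fin_cases i <;>
    simp [sgRep, sgM, Matrix.toLin'_apply, Matrix.mulVec, dotProduct, Fin.sum_univ_two, Matrix.vecHead, Matrix.vecTail]

lemma sgw_sub_ne (hodd : Odd n) (hm0 : 0 < m) (hmn : m < n) :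
    ((sgw n m : ℂ) - ((sgw n m)⁻¹ : ℂˣ)) ≠ 0 := by
  intro h
  apply sgw_sq_ne_one n m hodd hm0 hmn
  have hval : (sgw n m : ℂ) = ((sgw n m)⁻¹ : ℂˣ) := sub_eq_zero.mp h
  have heq : sgw n m = (sgw n m)⁻¹ := Units.ext hval
  rw [sq]
  nth_rewrite 1 [heq]
  simp

lemma invariant_classify (hodd : Odd n) (hm0 : 0 < m) (hmn : m < n) (hn1 : 1 < n) :
    ∀ p : Submodule ℂ (Fin 2 → ℂ),
      (∀ g : DihedralGroup n, ∀ x ∈ p, sgRep n m g x ∈ p) → p = ⊥ ∨ p = ⊤ := by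
  intro p hp
  by_cases hbot : p = ⊥
  · exact Or.inl hbot
  right
  obtain ⟨v, hv, hv0⟩ := (Submodule.ne_bot_iff p).mp hbot
  have step1 : ∃ y : ℂ, y ≠ 0 ∧ ![y, 0] ∈ p := by
    by_cases h0 : v 0 = 0
    · have h1 : v 1 ≠ 0 := by
        intro h1; apply hv0; funext i; fin_cases i <;> simp [h0, h1]
      refine ⟨v 1, h1, ?_⟩
      have hmem := hp (sr 0) v hv
      rw [sgRep_sr_apply] at hmem
      have heq : ![((sgc n m 0)⁻¹ : ℂˣ) * v 1, (sgc n m 0 : ℂ) * v 0] = ![v 1, (0:ℂ)] := by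
        funext i; fin_cases i <;> simp [sgc_zero, h0]
      rwa [heq] at hmem
    · have hw : sgc n m 1 = sgw n m := (sgc_one_eq n m).resolve_right (by omega)
      have hmem := p.sub_mem (hp (r 1) v hv) (p.smul_mem (((sgw n m)⁻¹ : ℂˣ) : ℂ) hv)
      rw [sgRep_r_apply] at hmem
      have heq : ![(sgc n m 1 : ℂ) * v 0, ((sgc n m 1)⁻¹ : ℂˣ) * v 1]
            - (((sgw n m)⁻¹ : ℂˣ) : ℂ) • v
          = ![((sgw n m : ℂ) - ((sgw n m)⁻¹ : ℂˣ)) * v 0, (0:ℂ)] := by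
        funext i; fin_cases i <;> simp [hw] <;> ring
      rw [heq] at hmem
      exact ⟨_, mul_ne_zero (sgw_sub_ne n m hodd hm0 hmn) h0, hmem⟩
  obtain ⟨y, hy, hyp⟩ := step1
  have step2 : ![(0:ℂ), y] ∈ p := by
    have hmem := hp (sr 0) _ hyp
    rw [sgRep_sr_apply] at hmem
    have heq : ![((sgc n m 0)⁻¹ : ℂˣ) * (![y, (0:ℂ)]) 1, (sgc n m 0 : ℂ) * (![y, (0:ℂ)]) 0]
        = ![(0:ℂ), y] := by
      funext i; fin_cases i <;> simp [sgc_zero]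
    rwa [heq] at hmem
  rw [Submodule.eq_top_iff']
  intro x
  have hx : x = (x 0 * y⁻¹) • ![y, (0:ℂ)] + (x 1 * y⁻¹) • ![(0:ℂ), y] := by
    funext i; fin_cases i <;> simp [hy]
  rw [hx]
  exact p.add_mem (p.smul_mem _ hyp) (p.smul_mem _ step2)

lemma sgz_pow_n :
    ((Complex.isPrimitiveRoot_exp n (NeZero.ne n)).isUnit
      (NeZero.ne n)).unit ^ n = 1 := by
  apply Units.ext
  rw [Units.val_pow_eq_pow_val, IsUnit.unit_spec, Units.val_one]
  exact (Complex.isPrimitiveRoot_exp n (NeZero.ne n)).pow_eq_one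

lemma sgc_eq_one (j : ZMod n) (h : n ∣ m * j.val) : sgc n m j = 1 := by
  obtain ⟨t, ht⟩ := h
  rw [sgc, sgw, ← pow_mul, ht, pow_mul, sgz_pow_n, one_pow]

lemma sgRep_eq_id (j : ZMod n) (h : sgc n m j = 1) : sgRep n m (r j) = LinearMap.id := by
  show Matrix.toLin' (sgM n m (r j)) = _
  have : sgM n m (r j) = 1 := by
    simp [sgM, h, Matrix.one_fin_two]
  rw [this, Matrix.toLin'_one]

end Construction

section Reps
open Subgroup
variable (n m : ℕ) [NeZero n]

noncomputable def sgV : FDRep ℂ (DihedralGroup n) := FDRep.of (sgRep n m)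

lemma sgV_simple (hodd : Odd n) (hm0 : 0 < m) (hmn : m < n) (hn1 : 1 < n) :
    Simple (sgV n m) := by
  apply simple_of_invariant
  · exact (inferInstance : Nontrivial (Fin 2 → ℂ))
  · intro p hp
    exact invariant_classify n m hodd hm0 hmn hn1 p hp

variable (H : Subgroup (DihedralGroup n))

noncomputable def sgW : FDRep ℂ H := FDRep.of (Representation.trivial ℂ (G := H) (V := ℂ))

lemma complex_submodule_classify (p : Submodule ℂ ℂ) : p = ⊥ ∨ p = ⊤ := by
  rcases eq_or_ne p ⊥ with h | h
  · exact Or.inl h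
  right
  obtain ⟨x, hx, hx0⟩ := (Submodule.ne_bot_iff p).mp h
  rw [Submodule.eq_top_iff']
  intro z
  have : z = (z * x⁻¹) • x := by rw [smul_eq_mul, mul_assoc, inv_mul_cancel₀ hx0, mul_one]
  rw [this]
  exact p.smul_mem _ hx

lemma sgW_simple : Simple (sgW n H) := by
  apply simple_of_invariant
  · exact (inferInstance : Nontrivial ℂ)
  · intro p _
    exact complex_submodule_classify p

noncomputable abbrev sgResV : FDRep ℂ H :=
  (Action.res (FGModuleCat ℂ) H.subtype).obj (sgV n m)

noncomputable def sgHomEquiv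
    (htriv : ∀ h : H, sgRep n m ((h : DihedralGroup n)) = LinearMap.id) :
    (sgW n H ⟶ sgResV n m H) ≃ₗ[ℂ] (ℂ →ₗ[ℂ] (Fin 2 → ℂ)) where
  toFun f := f.hom.hom.hom
  map_add' _ _ := rfl
  map_smul' _ _ := rfl
  invFun φ :=
    { hom := FGModuleCat.ofHom φ
      comm := fun h => by
        refine ConcreteCategory.hom_ext _ _ fun x => ?_
        show φ (Representation.trivial ℂ (G := H) (V := ℂ) h x) = sgRep n m (H.subtype h) (φ x)
        rw [show sgRep n m (H.subtype h) = LinearMap.id from htriv h]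
        rfl }
  left_inv _ := rfl
  right_inv _ := rfl

lemma sg_finrank_eq (htriv : ∀ h : H, sgRep n m ((h : DihedralGroup n)) = LinearMap.id) :
    Module.finrank ℂ (sgW n H ⟶ sgResV n m H) = 2 := by
  rw [LinearEquiv.finrank_eq (sgHomEquiv n m H htriv), Module.finrank_linearMap,
    Module.finrank_self, Module.finrank_fin_fun, one_mul]

end Reps


section Key
open Subgroup DihedralGroup

lemma sg_mem_zpowers_r_one {n : ℕ} {x : DihedralGroup n} (hx : x ∈ zpowers (r 1)) :
    ∃ j : ZMod n, x = r j := by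
  obtain ⟨k, hk⟩ := hx
  dsimp only at hk
  rcases k with k | k
  · rw [show Int.ofNat k = (k : ℤ) from rfl, zpow_natCast, r_one_pow] at hk
    exact ⟨k, hk.symm⟩
  · rw [zpow_negSucc, r_one_pow] at hk
    exact ⟨-((k + 1 : ℕ) : ZMod n), by rw [← hk]; rfl⟩

lemma sg_key (n m : ℕ) (hn : 3 ≤ n) (hodd : Odd n) (hm0 : 0 < m) (hmn : m < n)
    (H : Subgroup (DihedralGroup n)) (hle : H ≤ zpowers (r 1))
    (hpow : ∀ x ∈ H, x ^ m = 1) : ¬ IsStrongGelfandPair (DihedralGroup n) H := by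
  haveI : NeZero n := ⟨by omega⟩
  intro hsgp
  have htriv : ∀ h : H, sgRep n m (H.subtype h) = LinearMap.id := by
    intro h
    obtain ⟨j, hj⟩ := sg_mem_zpowers_r_one (hle h.2)
    have hxm : (r j : DihedralGroup n) ^ m = 1 := by rw [← hj]; exact hpow _ h.2
    have hrj : (r j : DihedralGroup n) = r 1 ^ j.val := by
      rw [r_one_pow]; exact congrArg r (ZMod.natCast_rightInverse j).symm
    rw [hrj, ← pow_mul, r_one_pow] at hxm
    rw [DihedralGroup.one_def] at hxm
    have h0 : ((j.val * m : ℕ) : ZMod n) = 0 := DihedralGroup.r.inj hxm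
    have hdvd : n ∣ m * j.val := by
      rw [mul_comm]; exact (ZMod.natCast_eq_zero_iff _ _).mp h0
    rw [show H.subtype h = r j from hj]
    exact sgRep_eq_id n m j (sgc_eq_one n m j hdvd)
  have h1 := hsgp (sgV n m) (sgW n H) (sgV_simple n m hodd hm0 hmn (by omega)) (sgW_simple n H)
  have h2 : Module.finrank ℂ
      (sgW n H ⟶ (Action.res (FGModuleCat ℂ) H.subtype).obj (sgV n m)) = 2 :=
    sg_finrank_eq n m H htriv
  omega

end Key

/-- For `n ≥ 3` odd and `m ∣ n` with `1 < m < n`, the pair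
`(D_{2n}, ⟨a^{n/m}⟩)` is not a strong Gelfand pair; consequently no proper
nontrivial subgroup of `⟨a⟩ ≤ D_{2n}` is a strong Gelfand subgroup. -/
theorem not_isStrongGelfandPair_dihedral_odd (n : ℕ) (hn : 3 ≤ n) (hodd : Odd n) :
    (∀ m : ℕ, m ∣ n → 1 < m → m < n →
      ¬ IsStrongGelfandPair (DihedralGroup n)
        (Subgroup.zpowers (DihedralGroup.r 1 ^ (n / m)))) ∧
    (∀ H : Subgroup (DihedralGroup n),
      H < Subgroup.zpowers (DihedralGroup.r 1) → H ≠ ⊥ →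
      ¬ IsStrongGelfandPair (DihedralGroup n) H) := by
  haveI : NeZero n := ⟨by omega⟩
  constructor
  · intro m hdvd hm1 hmn
    apply sg_key n m hn hodd (by omega) hmn
    · exact Subgroup.zpowers_le.mpr (Subgroup.pow_mem _ (Subgroup.mem_zpowers _) _)
    · intro x hx
      obtain ⟨k, hk⟩ := hx
      have hg : (DihedralGroup.r 1 ^ (n / m) : DihedralGroup n) ^ m = 1 := by
        rw [← pow_mul, Nat.div_mul_cancel hdvd, DihedralGroup.r_one_pow, ZMod.natCast_self,
          ← DihedralGroup.one_def]
      rw [← hk, ← zpow_natCast, ← zpow_mul, mul_comm k (m : ℤ), zpow_mul, zpow_natCast, hg,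
        one_zpow]
  · intro H hlt _
    have hle : H ≤ Subgroup.zpowers (DihedralGroup.r 1) := le_of_lt hlt
    have hcard : Nat.card (Subgroup.zpowers (DihedralGroup.r 1 : DihedralGroup n)) = n := by
      rw [Nat.card_zpowers, DihedralGroup.orderOf_r_one]
    have hmn : Nat.card H < n := by
      by_contra hge
      push_neg at hge
      exact hlt.ne (Subgroup.eq_of_le_of_card_ge hle (by rw [hcard]; exact hge))
    have hm0 : 0 < Nat.card H := Nat.card_pos
    apply sg_key n (Nat.card H) hn hodd hm0 hmn H hle
    intro x hx
    have h1 : (⟨x, hx⟩ : H) ^ Nat.card H = 1 := pow_card_eq_one'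
    have h2 : (((⟨x, hx⟩ : H) ^ Nat.card H : H) : DihedralGroup n)
        = ((1 : H) : DihedralGroup n) := congrArg _ h1
    rw [SubgroupClass.coe_pow, OneMemClass.coe_one] at h2
    exact h2
end

section
/- Let n ≥ 4 be even, write n = 2m, and let d be a divisor of n with 1 < d < n and d ≠ m. Then the pair (D_{2n}, ⟨a^{n/d}⟩), where ⟨a^{n/d}⟩ is the cyclic subgroup of order d of the rotation subgroup of D_{2n}, is not a strong Gelfand pair. Consequently, for n even, no proper subgroup of ⟨a²⟩ ≤ D_{2n} other than the subgroups excluded above is a strong Gelfand subgroup. -/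
open CategoryTheory

lemma mh_one {G M : Type} [Group G] [Monoid M] (f : G →* M) (x : G) (hx : f x = 1) :
    ∀ y ∈ Subgroup.zpowers x, f y = 1 := by
  rintro y ⟨k, rfl⟩
  simp only []
  rcases k with p | p
  all_goals simp only [zpow_natCast, zpow_negSucc, Int.ofNat_eq_coe]
  · rw [map_pow, hx, one_pow]
  · have h1 : f (x ^ (p + 1)) = 1 := by rw [map_pow, hx, one_pow]
    have h2 := map_mul f (x ^ (p + 1))⁻¹ (x ^ (p + 1))
    rw [inv_mul_cancel, map_one, h1, mul_one] at h2
    exact h2.symm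

section General
variable {G : Type} [Monoid G]

lemma fg_mono_inj {A B : FGModuleCat.{0} ℂ} (f : A ⟶ B) [Mono f] : Function.Injective f := by
  rw [injective_iff_map_eq_zero]
  intro u hu
  let g1 : FGModuleCat.of ℂ ℂ ⟶ A := ConcreteCategory.ofHom (LinearMap.toSpanSingleton ℂ A u)
  have hcomp : g1 ≫ f = (0 : FGModuleCat.of ℂ ℂ ⟶ A) ≫ f := by
    apply FGModuleCat.hom_ext
    apply LinearMap.ext
    intro c
    show f (c • u) = f ((0 : (ℂ →ₗ[ℂ] A)) c)
    simp only [LinearMap.zero_apply, map_zero, map_smul, hu, smul_zero]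
  have h2 := (cancel_mono f).mp hcomp
  calc u = (1:ℂ) • u := (one_smul ℂ u).symm
    _ = g1 ((1:ℂ) : FGModuleCat.of ℂ ℂ) := rfl
    _ = (0 : FGModuleCat.of ℂ ℂ ⟶ A) ((1:ℂ) : FGModuleCat.of ℂ ℂ) := by rw [h2]
    _ = 0 := rfl

lemma fdrep_mono_inj {Y V : FDRep ℂ G} (f : Y ⟶ V) [Mono f] :
    Function.Injective f.hom := by
  have : Mono f.hom := CategoryTheory.preserves_mono_of_preservesLimit (Action.forget _ _) f
  exact fg_mono_inj f.hom

lemma fdrep_isIso_of_bijective {Y V : FDRep ℂ G} (f : Y ⟶ V)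
    (hf : Function.Bijective f.hom) : IsIso f := by
  let e : Y.V ≃ₗ[ℂ] V.V := LinearEquiv.ofBijective f.hom.hom.hom hf
  have : IsIso f.hom := by
    refine ⟨⟨(ConcreteCategory.ofHom e.symm.toLinearMap : V.V ⟶ Y.V), ?_, ?_⟩⟩
    · ext y
      exact e.symm_apply_apply y
    · ext v
      exact e.apply_symm_apply v
  exact Action.isIso_of_hom_isIso f

lemma fdrep_hom_ne_zero {Y V : FDRep ℂ G} (f : Y ⟶ V) (hf : f ≠ 0) : f.hom ≠ 0 := by
  intro h
  exact hf (Action.Hom.ext h)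

lemma fdrep_exists_ne_zero {Y V : FDRep ℂ G} (f : Y ⟶ V) (hf : f ≠ 0) :
    ∃ y : Y.V, f.hom y ≠ 0 := by
  by_contra h
  push_neg at h
  exact fdrep_hom_ne_zero f hf (FGModuleCat.hom_ext (LinearMap.ext fun y => h y))

lemma fdrep_simple_of_finrank_one (X : FDRep ℂ G) (h1 : Module.finrank ℂ X = 1) :
    Simple X := by
  have h1' : Module.finrank ℂ X.V = 1 := h1
  constructor
  intro Y f hm
  constructor
  · intro hiso h0
    have h := congrArg Action.Hom.hom (IsIso.inv_hom_id f)
    have hfh : f.hom = 0 := by rw [h0]; exact Action.zero_hom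
    rw [Action.comp_hom, Action.id_hom, hfh, Limits.comp_zero] at h
    have : Nontrivial X.V := by
      rw [← Module.finrank_pos_iff (R := ℂ)]; omega
    obtain ⟨x, y, hxy⟩ := this
    have hx : ∀ z : X.V, z = 0 := by
      intro z
      calc z = 𝟙 X.V z := rfl
        _ = 0 := by rw [← h]; rfl
    exact hxy ((hx x).trans (hx y).symm)
  · intro h0
    have hinj : Function.Injective f.hom := fdrep_mono_inj f
    have hle : Module.finrank ℂ Y.V ≤ 1 := h1' ▸ LinearMap.finrank_le_finrank_of_injective hinj
    obtain ⟨y, hy⟩ := fdrep_exists_ne_zero f h0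
    have hy0 : y ≠ 0 := fun h => hy (by rw [h, map_zero])
    have hpos : 0 < Module.finrank ℂ Y.V := by
      rw [Module.finrank_pos_iff (R := ℂ)]
      exact ⟨y, 0, hy0⟩
    have heq : Module.finrank ℂ Y.V = Module.finrank ℂ X.V := by rw [h1']; omega
    have hsurj := (LinearMap.injective_iff_surjective_of_finrank_eq_finrank heq).mp hinj
    exact fdrep_isIso_of_bijective f ⟨hinj, hsurj⟩

end General

section Dih
open DihedralGroup

variable {n : ℕ}

noncomputable def Ffun (ζ : ℂ) (i : ZMod n) : ℂ := ζ ^ i.val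

lemma pow_mod_eq (ζ : ℂ) (hζ : ζ ^ n = 1) (a : ℕ) : ζ ^ (a % n) = ζ ^ a := by
  conv_rhs => rw [← Nat.div_add_mod a n]
  rw [pow_add, pow_mul, hζ, one_pow, one_mul]

lemma Ffun_add [NeZero n] (ζ : ℂ) (hζ : ζ ^ n = 1) (i j : ZMod n) :
    Ffun ζ (i + j) = Ffun ζ i * Ffun ζ j := by
  unfold Ffun
  rw [ZMod.val_add, pow_mod_eq ζ hζ, pow_add]

lemma Ffun_zero [NeZero n] (ζ : ℂ) : Ffun ζ (0 : ZMod n) = 1 := by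
  simp [Ffun]

lemma Ffun_neg_mul [NeZero n] (ζ : ℂ) (hζ : ζ ^ n = 1) (i : ZMod n) :
    Ffun ζ (-i) * Ffun ζ i = 1 := by
  rw [← Ffun_add ζ hζ, neg_add_cancel, Ffun_zero]

noncomputable def Mfun (ζ : ℂ) : DihedralGroup n → Matrix (Fin 2) (Fin 2) ℂ
  | r i => !![Ffun ζ i, 0; 0, Ffun ζ (-i)]
  | sr i => !![0, Ffun ζ (-i); Ffun ζ i, 0]

noncomputable def Mhom [NeZero n] (ζ : ℂ) (hζ : ζ ^ n = 1) :
    DihedralGroup n →* Matrix (Fin 2) (Fin 2) ℂ where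
  toFun := Mfun ζ
  map_one' := by
    show Mfun ζ (r 0) = 1
    simp [Mfun, Ffun_zero, Matrix.one_fin_two]
  map_mul' := by
    rintro (i | i) (j | j) <;>
      simp only [r_mul_r, r_mul_sr, sr_mul_r, sr_mul_sr, Mfun, Matrix.mul_fin_two] <;>
      simp only [sub_eq_add_neg, neg_add, neg_neg, Ffun_add ζ hζ] <;> ring_nf

noncomputable def dihRep [NeZero n] (ζ : ℂ) (hζ : ζ ^ n = 1) :
    Representation ℂ (DihedralGroup n) (Fin 2 → ℂ) :=
  ((Matrix.toLinAlgEquiv' (R := ℂ) (n := Fin 2)).toAlgHom.toMonoidHom).comp (Mhom ζ hζ)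

lemma dihRep_apply [NeZero n] (ζ : ℂ) (hζ : ζ ^ n = 1) (g : DihedralGroup n) (v : Fin 2 → ℂ) :
    dihRep ζ hζ g v = (Mfun ζ g).mulVec v := by
  rfl

lemma eigen_contra [NeZero n] (h1n : 1 < n) (ζ : ℂ) (hζ : ζ ^ n = 1) (hζ2 : ζ ^ 2 ≠ 1)
    (v : Fin 2 → ℂ) (hv : v ≠ 0) (c₁ c₂ : ℂ)
    (h₁ : dihRep ζ hζ (r 1) v = c₁ • v)
    (h₂ : dihRep ζ hζ (sr 0) v = c₂ • v) : False := by
  have E1 : Ffun ζ (1 : ZMod n) * v 0 = c₁ * v 0 := by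
    have := congrFun h₁ 0
    rw [dihRep_apply] at this
    simpa [Mfun, Matrix.mulVec, dotProduct, Fin.sum_univ_two] using this
  have E2 : Ffun ζ (-(1 : ZMod n)) * v 1 = c₁ * v 1 := by
    have := congrFun h₁ 1
    rw [dihRep_apply] at this
    simpa [Mfun, Matrix.mulVec, dotProduct, Fin.sum_univ_two] using this
  have E3 : v 1 = c₂ * v 0 := by
    have := congrFun h₂ 0
    rw [dihRep_apply] at this
    simpa [Mfun, Matrix.mulVec, dotProduct, Fin.sum_univ_two, Ffun_zero] using this
  have E4 : v 0 = c₂ * v 1 := by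
    have := congrFun h₂ 1
    rw [dihRep_apply] at this
    simpa [Mfun, Matrix.mulVec, dotProduct, Fin.sum_univ_two, Ffun_zero] using this
  have hF1 : Ffun ζ (1 : ZMod n) = ζ := by
    unfold Ffun
    rw [ZMod.val_one_eq_one_mod]
    rw [Nat.mod_eq_of_lt h1n, pow_one]
  by_cases h0 : v 0 = 0
  · have h1 : v 1 = 0 := by rw [E3, h0, mul_zero]
    apply hv
    funext i
    fin_cases i <;> simpa [h0, h1]
  · have h1 : v 1 ≠ 0 := by
      intro h1
      rw [h1, mul_zero] at E4
      exact h0 E4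
    have hc1 : c₁ = ζ := by
      rw [← hF1]; exact (mul_right_cancel₀ h0 E1).symm
    have hc1' : c₁ = Ffun ζ (-(1 : ZMod n)) := (mul_right_cancel₀ h1 E2).symm
    apply hζ2
    have : ζ * Ffun ζ (-(1 : ZMod n)) = ζ * ζ := by rw [← hc1', hc1]
    calc ζ ^ 2 = ζ * ζ := sq ζ
      _ = ζ * Ffun ζ (-(1 : ZMod n)) := this.symm
      _ = Ffun ζ (1 : ZMod n) * Ffun ζ (-(1 : ZMod n)) := by rw [hF1]
      _ = 1 := by rw [mul_comm]; exact Ffun_neg_mul ζ hζ 1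

end Dih

section DihSimple
open DihedralGroup
variable {n : ℕ}

lemma fdrep_isIso_ne_zero {G : Type} [Monoid G] {Y X : FDRep ℂ G} (f : Y ⟶ X)
    (hnt : Nontrivial X.V) (hiso : IsIso f) : f ≠ 0 := by
  intro h0
  have h := congrArg Action.Hom.hom (IsIso.inv_hom_id f)
  have hfh : f.hom = 0 := by rw [h0]; exact Action.zero_hom
  rw [Action.comp_hom, Action.id_hom, hfh, Limits.comp_zero] at h
  obtain ⟨x, y, hxy⟩ := hnt
  have hx : ∀ z : X.V, z = 0 := fun z => by
    calc z = 𝟙 X.V z := rfl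
      _ = 0 := by rw [← h]; rfl
  exact hxy ((hx x).trans (hx y).symm)

lemma simple_dihRep [NeZero n] (h1n : 1 < n) (ζ : ℂ) (hζ : ζ ^ n = 1) (hζ2 : ζ ^ 2 ≠ 1) :
    Simple (FDRep.of (dihRep ζ hζ)) := by
  set X := FDRep.of (dihRep ζ hζ) with hX
  have hXrank : Module.finrank ℂ X.V = 2 := by
    show Module.finrank ℂ (Fin 2 → ℂ) = 2
    exact Module.finrank_fin_fun ℂ
  constructor
  intro Y f hm
  constructor
  · intro hiso
    refine fdrep_isIso_ne_zero f ?_ hiso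
    show Nontrivial (Fin 2 → ℂ)
    infer_instance
  · intro h0
    have hinj : Function.Injective f.hom := fdrep_mono_inj f
    have hle : Module.finrank ℂ Y.V ≤ 2 :=
      hXrank ▸ LinearMap.finrank_le_finrank_of_injective hinj
    obtain ⟨y, hy⟩ := fdrep_exists_ne_zero f h0
    have hy0 : y ≠ 0 := fun h => hy (by rw [h, map_zero])
    have hpos : 0 < Module.finrank ℂ Y.V := by
      rw [Module.finrank_pos_iff (R := ℂ)]
      exact ⟨y, 0, hy0⟩
    have key : ∀ g : DihedralGroup n, X.ρ g (f.hom y) = f.hom (Y.ρ g y) :=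
      fun g => (congrArg (fun (φ : Y.V ⟶ X.V) => φ y) (f.comm g)).symm
    rcases (by omega : Module.finrank ℂ Y.V = 1 ∨ Module.finrank ℂ Y.V = 2) with h1 | h2
    · exfalso
      have hspan := (finrank_eq_one_iff_of_nonzero' y hy0).mp h1
      obtain ⟨c₁, hc₁⟩ := hspan (Y.ρ (r 1) y)
      obtain ⟨c₂, hc₂⟩ := hspan (Y.ρ (sr 0) y)
      refine eigen_contra h1n ζ hζ hζ2 (f.hom y) hy c₁ c₂ ?_ ?_
      · have h := key (r 1)
        rw [← hc₁, map_smul] at h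
        exact h
      · have h := key (sr 0)
        rw [← hc₂, map_smul] at h
        exact h
    · have heq : Module.finrank ℂ Y.V = Module.finrank ℂ X.V := by rw [hXrank, h2]
      have hsurj := (LinearMap.injective_iff_surjective_of_finrank_eq_finrank heq).mp hinj
      exact fdrep_isIso_of_bijective f ⟨hinj, hsurj⟩

end DihSimple

section Part1
open DihedralGroup

lemma part1 (n m d : ℕ) (hn : 4 ≤ n) (hm : n = 2 * m) (hd : d ∣ n) (hd1 : 1 < d)
    (hdn : d < n) (hdm : d ≠ m) :
    ¬ IsStrongGelfandPair (DihedralGroup n) (Subgroup.zpowers (r 1 ^ (n / d))) := by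
  haveI : NeZero n := ⟨by omega⟩
  set ξ : ℂ := Complex.exp (2 * Real.pi * Complex.I / n) with hξdef
  have hξ : IsPrimitiveRoot ξ n := Complex.isPrimitiveRoot_exp n (by omega)
  set ζ : ℂ := ξ ^ d with hζdef
  have hζ : ζ ^ n = 1 := by
    rw [hζdef, ← pow_mul, mul_comm, pow_mul, hξ.pow_eq_one, one_pow]
  have hζ2 : ζ ^ 2 ≠ 1 := by
    intro hcon
    rw [hζdef, ← pow_mul] at hcon
    have hdvd := (hξ.pow_eq_one_iff_dvd _).mp hcon
    have h1 : n ≤ d * 2 := Nat.le_of_dvd (by omega) hdvd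
    have h4 : n ∣ d * 2 - n := Nat.dvd_sub hdvd dvd_rfl
    have h5 : d * 2 - n = 0 := by
      by_contra hne
      have := Nat.le_of_dvd (by omega) h4
      omega
    omega
  have hζd : ζ ^ (n / d) = 1 := by
    rw [hζdef, ← pow_mul, Nat.mul_div_cancel' hd, hξ.pow_eq_one]
  set H : Subgroup (DihedralGroup n) := Subgroup.zpowers (r 1 ^ (n / d)) with hH
  -- the representation is trivial on H
  have hgen : dihRep ζ hζ (r 1 ^ (n / d)) = 1 := by
    rw [r_one_pow]
    show (Matrix.toLinAlgEquiv' (R := ℂ) (n := Fin 2)).toAlgHom.toMonoidHom (Mfun ζ (r ((n / d : ℕ) : ZMod n))) = 1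
    have hF : Ffun ζ (((n / d : ℕ) : ZMod n)) = 1 := by
      unfold Ffun
      rw [ZMod.val_natCast, pow_mod_eq ζ hζ, hζd]
    have hFn : Ffun ζ (-((n / d : ℕ) : ZMod n)) = 1 := by
      have := Ffun_neg_mul ζ hζ (((n / d : ℕ) : ZMod n))
      rw [hF, mul_one] at this
      exact this
    have : Mfun ζ (r ((n / d : ℕ) : ZMod n)) = 1 := by
      show !![Ffun ζ _, 0; 0, Ffun ζ _] = 1
      rw [hF, hFn, Matrix.one_fin_two]
    rw [this, map_one]
  have htriv : ∀ h : H, dihRep ζ hζ (h : DihedralGroup n) = 1 :=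
    fun h => mh_one (dihRep ζ hζ) _ hgen h h.2
  intro hSGP
  set X := FDRep.of (dihRep ζ hζ) with hXdef
  have hXsimple : Simple X := simple_dihRep (by omega) ζ hζ hζ2
  set W : FDRep ℂ H := FDRep.of (Representation.trivial ℂ (G := H) (V := ℂ)) with hWdef
  have hWsimple : Simple W := fdrep_simple_of_finrank_one W (by
    show Module.finrank ℂ ℂ = 1
    exact Module.finrank_self ℂ)
  set Y : FDRep ℂ H := (Action.res (FGModuleCat ℂ) H.subtype).obj X with hYdef
  have hbound := hSGP X W hXsimple hWsimple
  -- build injection (Fin 2 → ℂ) →ₗ (W ⟶ Y)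
  have hYρ : ∀ (h : H) (w : Fin 2 → ℂ), Y.ρ h w = w := by
    intro h w
    show dihRep ζ hζ (h : DihedralGroup n) w = w
    rw [htriv h]
    rfl
  let φ : (Fin 2 → ℂ) → (W ⟶ Y) := fun v =>
    { hom := (ConcreteCategory.ofHom (LinearMap.toSpanSingleton ℂ (Fin 2 → ℂ) v) : W.V ⟶ Y.V)
      comm := by
        intro h
        apply FGModuleCat.hom_ext
        apply LinearMap.ext
        intro c
        show LinearMap.toSpanSingleton ℂ (Fin 2 → ℂ) v ((Representation.trivial ℂ (G := H) (V := ℂ)) h c)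
            = Y.ρ h (LinearMap.toSpanSingleton ℂ (Fin 2 → ℂ) v c)
        rw [hYρ]
        rfl }
  let Φ : (Fin 2 → ℂ) →ₗ[ℂ] (W ⟶ Y) :=
    { toFun := φ
      map_add' := by
        intro v w
        apply Action.Hom.ext
        show ConcreteCategory.ofHom (LinearMap.toSpanSingleton ℂ (Fin 2 → ℂ) (v + w))
          = (φ v + φ w).hom
        rw [Action.add_hom]
        apply FGModuleCat.hom_ext
        apply LinearMap.ext
        intro c
        show c • (v + w) = c • v + c • w
        rw [smul_add]
      map_smul' := by
        intro a v
        apply Action.Hom.ext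
        show ConcreteCategory.ofHom (LinearMap.toSpanSingleton ℂ (Fin 2 → ℂ) (a • v)) = (a • φ v).hom
        rw [Action.smul_hom]
        apply FGModuleCat.hom_ext
        apply LinearMap.ext
        intro c
        show c • (a • v) = a • (c • v)
        rw [smul_comm] }
  have hΦinj : Function.Injective Φ := by
    rw [injective_iff_map_eq_zero]
    intro v hv
    have := congrArg Action.Hom.hom hv
    rw [Action.zero_hom] at this
    calc v = (1 : ℂ) • v := (one_smul ℂ v).symm
      _ = @id (Fin 2 → ℂ) ((Φ v).hom.hom.hom (1 : ℂ)) := rfl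
      _ = @id (Fin 2 → ℂ) ((0 : W.V ⟶ Y.V).hom.hom (1 : ℂ)) := by rw [this]
      _ = 0 := rfl
  have h2le : 2 ≤ Module.finrank ℂ (W ⟶ Y) := by
    have := LinearMap.finrank_le_finrank_of_injective hΦinj
    rwa [Module.finrank_fin_fun] at this
  have hcontra : (2 : ℕ) ≤ 1 := le_trans h2le hbound
  omega

end Part1

section Part2
open DihedralGroup

lemma subgroup_eq_of_le_of_card_le {G : Type} [Group G] [Finite G] {H K : Subgroup G}
    (hle : H ≤ K) (hc : Nat.card K ≤ Nat.card H) : H = K := by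
  have he : Nat.card (H.subgroupOf K) = Nat.card H :=
    Nat.card_congr (Subgroup.subgroupOfEquivOfLe hle).toEquiv
  have hle2 : Nat.card (H.subgroupOf K) ≤ Nat.card (⊤ : Subgroup K) :=
    Subgroup.card_le_of_le le_top
  rw [Subgroup.card_top] at hle2
  have htop : H.subgroupOf K = ⊤ :=
    (Subgroup.card_eq_iff_eq_top _).mp (by omega)
  exact le_antisymm hle (Subgroup.subgroupOf_eq_top.mp htop)

lemma part2 (n m : ℕ) (hn : 4 ≤ n) (hm : n = 2 * m) (H : Subgroup (DihedralGroup n))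
    (hlt : H < Subgroup.zpowers (r 1 ^ 2)) (hbot : H ≠ ⊥) :
    ¬ IsStrongGelfandPair (DihedralGroup n) H := by
  haveI : NeZero n := ⟨by omega⟩
  have hKcard : Nat.card (Subgroup.zpowers ((r 1 : DihedralGroup n) ^ 2)) = m := by
    rw [Nat.card_zpowers, orderOf_pow, orderOf_r_one]
    rw [Nat.gcd_eq_right ⟨m, by omega⟩]
    omega
  set c := Nat.card H with hc
  have hcm : c ∣ m := by rw [← hKcard]; exact Subgroup.card_dvd_of_le hlt.le
  have hc1 : 1 < c := (Subgroup.one_lt_card_iff_ne_bot H).mpr hbot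
  have hcmne : c ≠ m := by
    intro hceq
    exact hlt.ne (subgroup_eq_of_le_of_card_le hlt.le (by omega))
  have hcn : c ∣ n := hcm.trans ⟨2, by omega⟩
  have hcltm : c < m := lt_of_le_of_ne (Nat.le_of_dvd (by omega) hcm) hcmne
  have hc0 : (c : ℤ) ≠ 0 := by exact_mod_cast (by omega : c ≠ 0)
  have hHeq : H = Subgroup.zpowers ((r 1 : DihedralGroup n) ^ (n / c)) := by
    have hle : H ≤ Subgroup.zpowers ((r 1 : DihedralGroup n) ^ (n / c)) := by
      intro h hh
      obtain ⟨k, hk⟩ := hlt.le hh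
      have hk2 : ((r 1 : DihedralGroup n) ^ (2:ℕ)) ^ k = h := hk
      rw [← zpow_natCast (r 1 : DihedralGroup n) 2, ← zpow_mul] at hk2
      have hk' : (r 1 : DihedralGroup n) ^ (2 * k) = h := by
        rw [show ((2:ℕ):ℤ) * k = 2 * k by norm_num] at hk2
        exact hk2
      have hpow : h ^ c = 1 := by
        have h1 := pow_card_eq_one' (G := H) (x := ⟨h, hh⟩)
        rw [Subtype.ext_iff, SubmonoidClass.coe_pow] at h1
        exact h1
      have hdvd : (n : ℤ) ∣ 2 * k * c := by
        rw [← DihedralGroup.orderOf_r_one (n := n), orderOf_dvd_iff_zpow_eq_one]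
        rw [zpow_mul, hk', zpow_natCast, hpow]
      obtain ⟨u, hu⟩ := hdvd
      have hnc : (n : ℤ) = ((n / c : ℕ) : ℤ) * (c : ℤ) := by
        exact_mod_cast (Nat.div_mul_cancel hcn).symm
      have h2k : 2 * k = ((n / c : ℕ) : ℤ) * u := by
        have : 2 * k * c = (((n / c : ℕ) : ℤ) * u) * c := by
          rw [hu, hnc]; ring
        exact mul_right_cancel₀ hc0 this
      refine ⟨u, ?_⟩
      calc ((r 1 : DihedralGroup n) ^ (n / c)) ^ u
          = ((r 1 : DihedralGroup n) ^ ((n / c : ℕ) : ℤ)) ^ u := by rw [zpow_natCast]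
        _ = (r 1 : DihedralGroup n) ^ (((n / c : ℕ) : ℤ) * u) := by rw [← zpow_mul]
        _ = (r 1 : DihedralGroup n) ^ (2 * k) := by rw [← h2k]
        _ = h := hk'
    have hZcard : Nat.card (Subgroup.zpowers ((r 1 : DihedralGroup n) ^ (n / c))) = c := by
      rw [Nat.card_zpowers, orderOf_pow, orderOf_r_one,
        Nat.gcd_eq_right (Nat.div_dvd_of_dvd hcn), Nat.div_div_self hcn (by omega)]
    exact (subgroup_eq_of_le_of_card_le hle (by rw [hZcard])).symm ▸ rfl
  rw [hHeq]
  exact part1 n m c hn hm hcn hc1 (by omega) hcmne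

end Part2

/-- For `n = 2m ≥ 4` even and `d ∣ n` with `1 < d < n` and `d ≠ m`, the pair
`(D_{2n}, ⟨a^{n/d}⟩)` is not a strong Gelfand pair; consequently no proper
nontrivial subgroup of `⟨a²⟩ ≤ D_{2n}` is a strong Gelfand subgroup. -/
theorem not_isStrongGelfandPair_dihedral_even (n m : ℕ) (hn : 4 ≤ n)
    (heven : Even n) (hm : n = 2 * m) :
    (∀ d : ℕ, d ∣ n → 1 < d → d < n → d ≠ m →
      ¬ IsStrongGelfandPair (DihedralGroup n)
        (Subgroup.zpowers (DihedralGroup.r 1 ^ (n / d)))) ∧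
    (∀ H : Subgroup (DihedralGroup n),
      H < Subgroup.zpowers (DihedralGroup.r 1 ^ 2) → H ≠ ⊥ →
      ¬ IsStrongGelfandPair (DihedralGroup n) H) := by
  exact ⟨fun d hd hd1 hdn hdm => part1 n m d hn hm hd hd1 hdn hdm,
    fun H hlt hbot => part2 n m hn hm H hlt hbot⟩
end

section
/- For every n ≥ 2 and every i, the pair (Dic_{4n}, ⟨ba^i⟩) is a strong Gelfand pair, where ⟨ba^i⟩ is the cyclic subgroup of order 4 of the dicyclic group Dic_{4n} generated by the element ba^i. -/
open CategoryTheory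

open Module

set_option linter.unusedSectionVars false

section Sub
variable {G : Type} [Group G]

/-- An invariant nonzero submodule of a simple `FDRep` is everything. -/
lemma subrep_eq_top (V : FDRep ℂ G) (hV : Simple V) (p : Submodule ℂ V)
    (hp : ∀ (g : G), ∀ v ∈ p, V.ρ g v ∈ p) (hbot : p ≠ ⊥) : p = ⊤ := by
  haveI := hV
  let ρ' : Representation ℂ G p :=
    { toFun := fun g => (V.ρ g).restrict (hp g)
      map_one' := by ext v; simp [LinearMap.restrict_apply]
      map_mul' := fun g h => by
        ext v; simp [LinearMap.restrict_apply, Module.End.mul_apply] }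
  let Y : FDRep ℂ G := FDRep.of ρ'
  let ι : Y ⟶ V := ⟨ObjectProperty.homMk (ModuleCat.ofHom p.subtype), fun g => rfl⟩
  haveI : Mono ι := ⟨fun {Z} f g h => by
    ext z
    exact (congrArg (fun (φ : Z ⟶ V) => φ.hom z) h)⟩
  have hne : ι ≠ 0 := by
    obtain ⟨v, hvp, hv0⟩ := Submodule.exists_mem_ne_zero_of_ne_bot hbot
    intro h0
    have : ι.hom ⟨v, hvp⟩ = 0 := by rw [h0]; rfl
    exact hv0 this
  haveI : IsIso ι := isIso_of_mono_of_nonzero hne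
  rw [Submodule.eq_top_iff']
  intro v
  have h : (inv ι ≫ ι) = 𝟙 V := IsIso.inv_hom_id ι
  have h2 : ι.hom ((inv ι).hom v) = v := congrArg (fun (φ : V ⟶ V) => φ.hom v) h
  rw [← h2]
  exact ((inv ι).hom v).2

/-- Schur: every endomorphism of a simple `FDRep` over `ℂ` is scalar. -/
lemma endo_scalar (V : FDRep ℂ G) (hV : Simple V) (φ : V ⟶ V) :
    ∃ t : ℂ, φ = t • 𝟙 V := by
  haveI := hV
  have h1 : finrank ℂ (V ⟶ V) = 1 := by
    rw [FDRep.finrank_hom_simple_simple V V, if_pos ⟨Iso.refl V⟩]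
  obtain ⟨t, ht⟩ := (finrank_eq_one_iff_of_nonzero' (𝟙 V) (id_nonzero V)).mp h1 φ
  exact ⟨t, ht.symm⟩

lemma rho_zpow_eigen (V : FDRep ℂ G) (g : G) (w : V) (μ : ℂ) (hμ : μ ≠ 0)
    (h : V.ρ g w = μ • w) : ∀ k : ℤ, V.ρ (g ^ k) w = (μ ^ k) • w := by
  have hn : ∀ m : ℕ, V.ρ (g ^ m) w = (μ ^ m) • w := by
    intro m
    induction m with
    | zero => simp
    | succ m ih =>
      rw [pow_succ, map_mul, Module.End.mul_apply, h, map_smul, ih, smul_smul, pow_succ]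
      ring_nf
  intro k
  cases k with
  | ofNat m => simpa using hn m
  | negSucc m =>
    have hcomp : ∀ u : V, V.ρ ((g ^ (m + 1))⁻¹) (V.ρ (g ^ (m + 1)) u) = u := by
      intro u
      rw [← Module.End.mul_apply, ← map_mul, inv_mul_cancel, map_one, Module.End.one_apply]
    have hinj : Function.Injective (V.ρ (g ^ (m + 1))) :=
      fun x y hxy => by rw [← hcomp x, ← hcomp y, hxy]
    apply hinj
    rw [← Module.End.mul_apply, ← map_mul]
    have hzero : ((m + 1 : ℕ) : ℤ) + Int.negSucc m = 0 := by
      rw [Int.negSucc_eq]; push_cast; ring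
    have hzero' : Int.negSucc m + ((m + 1 : ℕ) : ℤ) = 0 := by
      rw [Int.negSucc_eq]; push_cast; ring
    have hmul : g ^ (m + 1) * g ^ (Int.negSucc m) = 1 := by
      rw [← zpow_natCast g (m + 1), ← zpow_add, hzero, zpow_zero]
    rw [hmul, map_one, Module.End.one_apply, map_smul, hn (m + 1), smul_smul,
      ← zpow_natCast μ (m + 1), ← zpow_add₀ hμ, hzero', zpow_zero, one_smul]
end Sub

namespace GelfandAux
open QuaternionGroup

variable {n : ℕ} [NeZero n]

lemma happ {V : FDRep ℂ (QuaternionGroup n)} (u w : QuaternionGroup n) (v : V) :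
    V.ρ u (V.ρ w v) = V.ρ (u * w) v := by
  rw [map_mul, Module.End.mul_apply]

lemma a_pow_val (j : ZMod (2 * n)) : (a 1 : QuaternionGroup n) ^ j.val = a j := by
  haveI : NeZero (2 * n) := ⟨by have := NeZero.ne n; omega⟩
  rw [a_one_pow]
  congr 1
  rw [ZMod.natCast_val, ZMod.cast_id]

lemma invariant_all (i : ZMod (2 * n)) (V : FDRep ℂ (QuaternionGroup n)) (p : Submodule ℂ V)
    (hA : ∀ v ∈ p, V.ρ (a 1) v ∈ p) (hX : ∀ v ∈ p, V.ρ (xa i) v ∈ p) :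
    ∀ g : QuaternionGroup n, ∀ v ∈ p, V.ρ g v ∈ p := by
  have hpow : ∀ (m : ℕ), ∀ v ∈ p, V.ρ ((a 1 : QuaternionGroup n) ^ m) v ∈ p := by
    intro m
    induction m with
    | zero => intro v hv; simpa using hv
    | succ m ih =>
      intro v hv
      rw [pow_succ, map_mul, Module.End.mul_apply]
      exact ih _ (hA v hv)
  have ha' : ∀ (j : ZMod (2 * n)), ∀ v ∈ p, V.ρ (a j) v ∈ p := by
    intro j v hv
    rw [← a_pow_val j]
    exact hpow j.val v hv
  intro g v hv
  cases g with
  | a j => exact ha' j v hv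
  | xa j =>
    have hmul : (xa i : QuaternionGroup n) * a (j - i) = xa j := by
      rw [xa_mul_a]; congr 1; ring
    rw [← hmul, ← happ]
    exact hX _ (ha' _ v hv)

lemma eigen_finrank_le (i : ZMod (2 * n)) (V : FDRep ℂ (QuaternionGroup n)) (hV : Simple V)
    (μ : ℂ) : finrank ℂ (Module.End.eigenspace (V.ρ (xa i)) μ) ≤ 1 := by
  set E := Module.End.eigenspace (V.ρ (xa i)) μ with hE
  -- basic relations
  have hA'A : ∀ v : V, V.ρ (a (-1)) (V.ρ (a 1) v) = v := by
    intro v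
    rw [happ, a_mul_a, neg_add_cancel, ← one_def, map_one, Module.End.one_apply]
  have hXinv : ∀ v : V, V.ρ ((xa i)⁻¹) (V.ρ (xa i) v) = v := by
    intro v
    rw [happ, inv_mul_cancel, map_one, Module.End.one_apply]
  -- the Schur scalar for A + A⁻¹
  let φ : V ⟶ V :=
    { hom := ObjectProperty.homMk (ModuleCat.ofHom (V.ρ (a 1) + V.ρ (a (-1)) : V →ₗ[ℂ] V))
      comm := by
        intro g
        ext v
        change (V.ρ (a 1) + V.ρ (a (-1))) (V.ρ g v) = V.ρ g ((V.ρ (a 1) + V.ρ (a (-1))) v)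
        rw [LinearMap.add_apply, LinearMap.add_apply, map_add, happ, happ, happ, happ]
        cases g with
        | a j =>
          have e1 : (a 1 : QuaternionGroup n) * a j = a j * a 1 := by
            rw [a_mul_a, a_mul_a]; ring_nf
          have e2 : (a (-1) : QuaternionGroup n) * a j = a j * a (-1) := by
            rw [a_mul_a, a_mul_a]; ring_nf
          rw [e1, e2]
        | xa j =>
          have e1 : (a 1 : QuaternionGroup n) * xa j = xa j * a (-1) := by
            rw [a_mul_xa, xa_mul_a]; congr 1; ring
          have e2 : (a (-1) : QuaternionGroup n) * xa j = xa j * a 1 := by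
            rw [a_mul_xa, xa_mul_a]; congr 1; ring
          rw [e1, e2, add_comm] }
  obtain ⟨t, ht⟩ := endo_scalar V hV φ
  have hφ : ∀ v : V, V.ρ (a 1) v + V.ρ (a (-1)) v = t • v := by
    intro v
    have h0 := congrArg (fun ψ : V ⟶ V => ψ.hom v) ht
    exact h0
  have hA'form : ∀ v : V, V.ρ (a (-1)) v = t • v - V.ρ (a 1) v := by
    intro v; rw [← hφ v]; abel
  have hXA : ∀ v : V, V.ρ (xa i) (V.ρ (a 1) v) = V.ρ (a (-1)) (V.ρ (xa i) v) := by
    intro v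
    rw [happ, happ, xa_mul_a, a_mul_xa]
    congr 2
    ring
  -- trivial case
  by_cases hEbot : E = ⊥
  · rw [hEbot]
    simp
  -- pick a nonzero eigenvector u
  obtain ⟨u, huE, hu0⟩ := Submodule.exists_mem_ne_zero_of_ne_bot hEbot
  have hXu : V.ρ (xa i) u = μ • u := Module.End.mem_eigenspace_iff.mp huE
  have hμ0 : μ ≠ 0 := by
    intro h0
    apply hu0
    rw [← hXinv u, hXu, h0, zero_smul, map_zero]
  by_cases hspan : V.ρ (a 1) u ∈ Submodule.span ℂ {u}
  · -- V is spanned by u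
    have hAinv : ∀ v ∈ Submodule.span ℂ ({u} : Set V), V.ρ (a 1) v ∈ Submodule.span ℂ {u} := by
      intro v hv
      obtain ⟨c, rfl⟩ := Submodule.mem_span_singleton.mp hv
      rw [map_smul]
      exact Submodule.smul_mem _ _ hspan
    have hXinv' : ∀ v ∈ Submodule.span ℂ ({u} : Set V), V.ρ (xa i) v ∈ Submodule.span ℂ {u} := by
      intro v hv
      obtain ⟨c, rfl⟩ := Submodule.mem_span_singleton.mp hv
      rw [map_smul, hXu]
      exact Submodule.smul_mem _ _ (Submodule.smul_mem _ _ (Submodule.mem_span_singleton_self u))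
    have htop := subrep_eq_top V hV _ (invariant_all i V _ hAinv hXinv')
      (by simpa [Submodule.span_singleton_eq_bot] using hu0)
    calc finrank ℂ E ≤ finrank ℂ V := Submodule.finrank_le E
      _ = 1 := by rw [← finrank_top ℂ V, ← htop, finrank_span_singleton hu0]
  · -- V is spanned by u and A u
    set p := Submodule.span ℂ ({u, V.ρ (a 1) u} : Set V) with hp
    have hu_mem : u ∈ p := Submodule.subset_span (by simp)
    have hAu_mem : V.ρ (a 1) u ∈ p := Submodule.subset_span (by simp)
    have hAAu : V.ρ (a 1) (V.ρ (a 1) u) = t • V.ρ (a 1) u - u := by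
      have := hφ (V.ρ (a 1) u)
      rw [hA'A u] at this
      rw [← this]; abel
    have hXAu : V.ρ (xa i) (V.ρ (a 1) u) = μ • (t • u - V.ρ (a 1) u) := by
      rw [hXA, hXu, map_smul, hA'form u]
    have hAinv : ∀ v ∈ p, V.ρ (a 1) v ∈ p := by
      intro v hv
      obtain ⟨c, d, rfl⟩ := Submodule.mem_span_pair.mp hv
      rw [map_add, map_smul, map_smul, hAAu]
      exact Submodule.add_mem _ (Submodule.smul_mem _ _ hAu_mem)
        (Submodule.smul_mem _ _ (Submodule.sub_mem _ (Submodule.smul_mem _ _ hAu_mem) hu_mem))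
    have hXinv' : ∀ v ∈ p, V.ρ (xa i) v ∈ p := by
      intro v hv
      obtain ⟨c, d, rfl⟩ := Submodule.mem_span_pair.mp hv
      rw [map_add, map_smul, map_smul, hXu, hXAu]
      refine Submodule.add_mem _ (Submodule.smul_mem _ _ (Submodule.smul_mem _ _ hu_mem))
        (Submodule.smul_mem _ _ (Submodule.smul_mem _ _
          (Submodule.sub_mem _ (Submodule.smul_mem _ _ hu_mem) hAu_mem)))
    have htop := subrep_eq_top V hV _ (invariant_all i V _ hAinv hXinv')
      (by intro h; rw [h] at hu_mem; exact hu0 (Submodule.mem_bot ℂ |>.mp hu_mem))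
    have hEle : E ≤ Submodule.span ℂ {u} := by
      intro u' hu'
      have hu'p : u' ∈ p := by rw [htop]; trivial
      obtain ⟨c, d, hcd⟩ := Submodule.mem_span_pair.mp hu'p
      have hXu' : V.ρ (xa i) u' = μ • u' := Module.End.mem_eigenspace_iff.mp hu'
      have heq : c • (μ • u) + d • (μ • (t • u - V.ρ (a 1) u)) = μ • (c • u + d • V.ρ (a 1) u) := by
        rw [← hXu, ← hXAu, ← map_smul, ← map_smul, ← map_add, hcd, hXu']
      have key : (d * μ * t) • u = ((2 : ℂ) * μ * d) • V.ρ (a 1) u := by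
        linear_combination (norm := module) heq
      by_cases hd : d = 0
      · rw [hd, zero_smul, add_zero] at hcd
        rw [← hcd]
        exact Submodule.smul_mem _ _ (Submodule.mem_span_singleton_self u)
      · exfalso
        apply hspan
        have hne : (2 : ℂ) * μ * d ≠ 0 := by
          simp [hμ0, hd]
        have : V.ρ (a 1) u = (((2 : ℂ) * μ * d)⁻¹ * (d * μ * t)) • u := by
          rw [mul_smul, key, smul_smul, inv_mul_cancel₀ hne, one_smul]
        rw [this]
        exact Submodule.smul_mem _ _ (Submodule.mem_span_singleton_self u)
    calc finrank ℂ E ≤ finrank ℂ (Submodule.span ℂ ({u} : Set V)) := Submodule.finrank_mono hEle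
      _ = 1 := finrank_span_singleton hu0

end GelfandAux

/-- For every `n ≥ 2` and every `i`, the pair `(Dic_{4n}, ⟨b a^i⟩)` is a strong
Gelfand pair, where `b a^i` is the order-four element `xa i`. -/
theorem isStrongGelfandPair_dicyclic_xa (n : ℕ) (hn : 2 ≤ n) (i : ZMod (2 * n)) :
    IsStrongGelfandPair (QuaternionGroup n)
      (Subgroup.zpowers (QuaternionGroup.xa i)) := by
  haveI : NeZero n := ⟨by omega⟩
  intro V W hSV hSW
  haveI := hSV; haveI := hSW
  set U := (Action.res (FGModuleCat ℂ)
    (Subgroup.zpowers (QuaternionGroup.xa i)).subtype).obj V with hU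
  let x₀ : ↥(Subgroup.zpowers (QuaternionGroup.xa i)) :=
    ⟨QuaternionGroup.xa i, Subgroup.mem_zpowers _⟩
  -- `W` is nontrivial
  haveI hWnt : Nontrivial W := by
    by_contra hnt
    rw [not_nontrivial_iff_subsingleton] at hnt
    have h0 : (𝟙 W : W ⟶ W) = 0 := by
      apply Action.Hom.ext
      apply FGModuleCat.hom_ext
      apply LinearMap.ext
      intro v
      exact @Subsingleton.elim _ hnt _ _
    exact id_nonzero W h0
  -- eigenvector of the generator
  obtain ⟨μ, hμev⟩ := Module.End.exists_eigenvalue (W.ρ x₀)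
  obtain ⟨w, hw⟩ := hμev.exists_hasEigenvector
  have hww : W.ρ x₀ w = μ • w := hw.apply_eq_smul
  have hw0 : w ≠ 0 := hw.right
  have hWinv : ∀ v : W, W.ρ (x₀⁻¹) (W.ρ x₀ v) = v := by
    intro v
    rw [← Module.End.mul_apply, ← map_mul, inv_mul_cancel, map_one, Module.End.one_apply]
  have hμ0 : μ ≠ 0 := by
    intro h0
    apply hw0
    rw [← hWinv w, hww, h0, zero_smul, map_zero]
  -- the span of `w` is all of `W`
  have hspanW : Submodule.span ℂ ({w} : Set W) = ⊤ := by
    apply subrep_eq_top W hSW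
    · intro h v hv
      obtain ⟨c, rfl⟩ := Submodule.mem_span_singleton.mp hv
      obtain ⟨k, hk⟩ := Subgroup.mem_zpowers_iff.mp h.2
      have hx : x₀ ^ k = h := Subtype.ext (by rw [SubgroupClass.coe_zpow]; exact hk)
      rw [map_smul, ← hx, rho_zpow_eigen W x₀ w μ hμ0 hww k]
      exact Submodule.smul_mem _ _ (Submodule.smul_mem _ _ (Submodule.mem_span_singleton_self w))
    · simpa [Submodule.span_singleton_eq_bot] using hw0
  -- evaluation map into the eigenspace
  set E := Module.End.eigenspace (V.ρ (QuaternionGroup.xa i)) μ with hE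
  let ev₀ : (W ⟶ U) →ₗ[ℂ] V :=
    { toFun := fun f => f.hom w
      map_add' := fun f g => show (f + g).hom w = _ by rw [Action.add_hom]; rfl
      map_smul' := fun c f => show (c • f).hom w = _ by rw [Action.smul_hom]; rfl }
  have hmem : ∀ f : W ⟶ U, ev₀ f ∈ E := by
    intro f
    rw [hE, Module.End.mem_eigenspace_iff]
    have h1 := ConcreteCategory.congr_hom (f.comm x₀) w
    change f.hom (W.ρ x₀ w) = V.ρ (QuaternionGroup.xa i) (f.hom w) at h1
    rw [hww, map_smul] at h1
    exact h1.symm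
  have hinj : Function.Injective (LinearMap.codRestrict E ev₀ hmem) := by
    intro f g hfg
    have h1 : ev₀ f = ev₀ g := congrArg Subtype.val hfg
    apply Action.Hom.ext
    apply FGModuleCat.hom_ext
    apply LinearMap.ext_on hspanW
    rintro x rfl
    exact h1
  calc finrank ℂ (W ⟶ U) ≤ finrank ℂ E :=
        LinearMap.finrank_le_finrank_of_injective hinj
    _ ≤ 1 := GelfandAux.eigen_finrank_le i V hSV μ
end

section
/- For every n ≥ 2, the pair (Dic_{4n}, ⟨a⟩) is a strong Gelfand pair, where ⟨a⟩ is the maximal cyclic subgroup of order 2n of the dicyclic group Dic_{4n}. -/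
open CategoryTheory

namespace StrongGelfandAux

open Module QuaternionGroup

variable {G : Type} [Group G]

lemma sub_top (V : FDRep ℂ G) [Simple V] (U : Submodule ℂ V)
    (hU : ∀ g : G, ∀ v ∈ U, V.ρ g v ∈ U) (hne : U ≠ ⊥) : U = ⊤ := by
  let ρU : Representation ℂ G U :=
    { toFun := fun g => (V.ρ g).restrict (hU g)
      map_one' := by ext x; simp
      map_mul' := fun g h => by ext x; simp [LinearMap.restrict_apply] }
  let ι : FDRep.of ρU ⟶ V :=
    { hom := FGModuleCat.ofHom U.subtype
      comm := fun g => by ext x; rfl }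
  have hmono : Mono ι := by
    apply (Action.forget _ _).mono_of_mono_map
    exact ConcreteCategory.mono_of_injective _ U.injective_subtype
  have hne' : ι ≠ 0 := by
    obtain ⟨v, hv, hv0⟩ := Submodule.exists_mem_ne_zero_of_ne_bot hne
    intro h
    have : ι.hom ⟨v, hv⟩ = 0 := by rw [h]; rfl
    exact hv0 this
  have : IsIso ι := (Simple.mono_isIso_iff_nonzero ι).mpr hne'
  have hiso : IsIso ι.hom := by
    have := Functor.map_isIso (Action.forget (FGModuleCat ℂ) (MonCat.of G)) ι
    exact this
  have hsurj : Function.Surjective ι.hom :=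
    (FGModuleCat.isoToLinearEquiv (asIso ι.hom)).surjective
  rw [← Submodule.range_subtype U]
  exact LinearMap.range_eq_top_of_surjective _ hsurj

lemma nontriv (V : FDRep ℂ G) [Simple V] : ∃ v : V, v ≠ 0 := by
  by_contra h
  push_neg at h
  haveI : Subsingleton V := ⟨fun a b => by rw [h a, h b]⟩
  apply id_nonzero V
  ext v
  exact h _

lemma scalar (W : FDRep ℂ G) [Simple W] (h₀ : G) (hc : ∀ h, h * h₀ = h₀ * h) :
    ∃ ζ : ℂ, ∀ w : W, W.ρ h₀ w = ζ • w := by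
  let φ : W ⟶ W :=
    { hom := FGModuleCat.ofHom (W.ρ h₀)
      comm := fun h => by
        ext w
        change W.ρ h₀ (W.ρ h w) = W.ρ h (W.ρ h₀ w)
        rw [← Module.End.mul_apply, ← Module.End.mul_apply, ← map_mul, ← map_mul, hc] }
  obtain ⟨c, hc'⟩ := endomorphism_simple_eq_smul_id ℂ φ
  refine ⟨c, fun w => ?_⟩
  have h2 : (c • 𝟙 W).hom w = φ.hom w := by rw [hc']
  have h3 : (c • 𝟙 W).hom w = c • w := by
    rw [Action.smul_hom]
    rfl
  exact (h3 ▸ h2).symm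

lemma eig_le_one {n : ℕ} [NeZero n] (V : FDRep ℂ (QuaternionGroup n)) [Simple V] (ζ : ℂ) :
    finrank ℂ (Module.End.eigenspace (V.ρ (a 1) : Module.End ℂ V) ζ) ≤ 1 := by
  haveI : NeZero (2 * n) := ⟨by have := NeZero.ne n; omega⟩
  set E := Module.End.eigenspace (V.ρ (a 1) : Module.End ℂ V) ζ with hEdef
  by_cases hbot : E = ⊥
  · rw [hbot]; simp
  obtain ⟨v, hvE, hv0⟩ := Submodule.exists_mem_ne_zero_of_ne_bot hbot
  have hv : V.ρ (a 1) v = ζ • v := Module.End.mem_eigenspace_iff.mp hvE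
  have hmul : ∀ (g h : QuaternionGroup n) (w : V), V.ρ g (V.ρ h w) = V.ρ (g * h) w := by
    intro g h w; rw [map_mul]; rfl
  have hone : ∀ w : V, V.ρ 1 w = w := by intro w; rw [map_one]; rfl
  have hm1 : (a (-1) : QuaternionGroup n) * a 1 = 1 := by
    rw [a_mul_a, neg_add_cancel, one_def]
  have hζ0 : ζ ≠ 0 := by
    intro h0
    apply hv0
    have h1 : V.ρ (a (-1)) (V.ρ (a 1) v) = v := by rw [hmul, hm1, hone]
    rw [hv, h0, zero_smul, map_zero] at h1
    exact h1.symm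
  have hinv : ∀ w : V, V.ρ (a 1) w = ζ • w → V.ρ (a (-1)) w = ζ⁻¹ • w := by
    intro w hw
    have h1 : V.ρ (a (-1)) (V.ρ (a 1) w) = w := by rw [hmul, hm1, hone]
    rw [hw, map_smul] at h1
    calc V.ρ (a (-1)) w = ζ⁻¹ • (ζ • V.ρ (a (-1)) w) := by
          rw [smul_smul, inv_mul_cancel₀ hζ0, one_smul]
      _ = ζ⁻¹ • w := by rw [h1]
  have hpow : ∀ (w : V) (c : ℂ), V.ρ (a 1) w = c • w →
      ∀ k : ℕ, V.ρ ((a 1 : QuaternionGroup n) ^ k) w = c ^ k • w := by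
    intro w c hw k
    induction k with
    | zero => simpa using hone w
    | succ k ih =>
      rw [pow_succ, ← hmul, hw, map_smul, ih, smul_smul]
      congr 1
      ring
  have ha_i : ∀ i : ZMod (2 * n), (a i : QuaternionGroup n) = (a 1) ^ i.val := by
    intro i
    rw [a_one_pow]
    congr 1
    simp [ZMod.natCast_val, ZMod.cast_id]
  by_cases hcase : ζ⁻¹ = ζ
  · -- E is invariant
    have hEinv : ∀ g : QuaternionGroup n, ∀ w ∈ E, V.ρ g w ∈ E := by
      rintro (i | i) w hw
      · have hw' : V.ρ (a 1) w = ζ • w := Module.End.mem_eigenspace_iff.mp hw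
        refine Module.End.mem_eigenspace_iff.mpr ?_
        rw [hmul, show (a 1 : QuaternionGroup n) * a i = a i * a 1 by
          rw [a_mul_a, a_mul_a, add_comm], ← hmul, hw', map_smul]
      · have hw' : V.ρ (a 1) w = ζ • w := Module.End.mem_eigenspace_iff.mp hw
        refine Module.End.mem_eigenspace_iff.mpr ?_
        have h2 : (a 1 : QuaternionGroup n) * xa i = xa i * a (-1) := by
          rw [a_mul_xa, xa_mul_a]
          ring_nf
        rw [hmul, h2, ← hmul, hinv w hw', map_smul, hcase]
    have hEtop : E = ⊤ := sub_top V E hEinv hbot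
    have hall : ∀ w : V, V.ρ (a 1) w = ζ • w := by
      intro w
      have hwE : w ∈ E := by rw [hEtop]; trivial
      exact Module.End.mem_eigenspace_iff.mp hwE
    obtain ⟨w0, hw00⟩ := nontriv V
    haveI : Nontrivial V := ⟨⟨w0, 0, hw00⟩⟩
    obtain ⟨μ, hμ⟩ := Module.End.exists_eigenvalue (V.ρ (xa 0) : Module.End ℂ V)
    obtain ⟨v₁, hv₁⟩ := hμ.exists_hasEigenvector
    have hv₁x : V.ρ (xa 0) v₁ = μ • v₁ := hv₁.apply_eq_smul
    have hUinv : ∀ g : QuaternionGroup n, ∀ w ∈ Submodule.span ℂ {v₁},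
        V.ρ g w ∈ Submodule.span ℂ {v₁} := by
      have key : ∀ g : QuaternionGroup n, V.ρ g v₁ ∈ Submodule.span ℂ {v₁} := by
        rintro (i | i)
        · rw [ha_i i, hpow v₁ ζ (hall v₁)]
          exact Submodule.smul_mem _ _ (Submodule.mem_span_singleton_self _)
        · have : (xa i : QuaternionGroup n) = a (-i) * xa 0 := by
            rw [a_mul_xa, zero_sub, neg_neg]
          rw [this, ← hmul, hv₁x, map_smul, ha_i (-i), hpow v₁ ζ (hall v₁)]
          exact Submodule.smul_mem _ _ (Submodule.smul_mem _ _
            (Submodule.mem_span_singleton_self _))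
      intro g w hw
      obtain ⟨c, rfl⟩ := Submodule.mem_span_singleton.mp hw
      rw [map_smul]
      exact Submodule.smul_mem _ _ (key g)
    have hUtop : Submodule.span ℂ {v₁} = ⊤ :=
      sub_top V _ hUinv (by simpa [Submodule.span_singleton_eq_bot] using hv₁.right)
    calc finrank ℂ E ≤ finrank ℂ V := Submodule.finrank_le E
      _ = finrank ℂ (⊤ : Submodule ℂ V) := (finrank_top ℂ V).symm
      _ = 1 := by rw [← hUtop]; exact finrank_span_singleton hv₁.right
  · -- two distinct eigenvalues
    set u := V.ρ (xa 0) v with hudef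
    have hu0 : u ≠ 0 := by
      intro h0
      apply hv0
      have h1 : V.ρ (xa 0)⁻¹ (V.ρ (xa 0) v) = v := by rw [hmul, inv_mul_cancel, hone]
      rw [← hudef, h0, map_zero] at h1
      exact h1.symm
    have hau : V.ρ (a 1) u = ζ⁻¹ • u := by
      have h2 : (a 1 : QuaternionGroup n) * xa 0 = xa 0 * a (-1) := by
        rw [a_mul_xa, xa_mul_a]
        ring_nf
      rw [hudef, hmul, h2, ← hmul, hinv v hv, map_smul]
    have hxu : V.ρ (xa 0) u = (ζ ^ n) • v := by
      have h1 : (xa 0 : QuaternionGroup n) * xa 0 = a ((n : ℕ) : ZMod (2 * n)) := by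
        rw [xa_mul_xa]; ring_nf
      rw [hudef, hmul, h1, ← a_one_pow, hpow v ζ hv]
    set U := Submodule.span ℂ {v, u} with hUdef
    have hvU : v ∈ U := Submodule.subset_span (Set.mem_insert _ _)
    have huU : u ∈ U := Submodule.subset_span (Set.mem_insert_of_mem _ rfl)
    have key : ∀ g : QuaternionGroup n, V.ρ g v ∈ U ∧ V.ρ g u ∈ U := by
      rintro (i | i)
      · constructor
        · rw [ha_i i, hpow v ζ hv]; exact Submodule.smul_mem _ _ hvU
        · rw [ha_i i, hpow u ζ⁻¹ hau]; exact Submodule.smul_mem _ _ huU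
      · have hxai : (xa i : QuaternionGroup n) = a (-i) * xa 0 := by
          rw [a_mul_xa, zero_sub, neg_neg]
        constructor
        · rw [hxai, ← hmul, ← hudef, ha_i (-i), hpow u ζ⁻¹ hau]
          exact Submodule.smul_mem _ _ huU
        · rw [hxai, ← hmul, hxu, map_smul, ha_i (-i), hpow v ζ hv]
          exact Submodule.smul_mem _ _ (Submodule.smul_mem _ _ hvU)
    have hUinv : ∀ g : QuaternionGroup n, ∀ w ∈ U, V.ρ g w ∈ U := by
      intro g w hw
      induction hw using Submodule.span_induction with
      | mem x hx =>
        rcases hx with h | h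
        · subst h; exact (key g).1
        · rw [Set.mem_singleton_iff] at h; subst h; exact (key g).2
      | zero => rw [map_zero]; exact Submodule.zero_mem _
      | add x y _ _ hx hy => rw [map_add]; exact Submodule.add_mem _ hx hy
      | smul c x _ hx => rw [map_smul]; exact Submodule.smul_mem _ _ hx
    have hUtop : U = ⊤ := by
      apply sub_top V U hUinv
      intro h
      exact hv0 (by simpa [h] using hvU)
    -- dimension count
    set E' := Module.End.eigenspace (V.ρ (a 1) : Module.End ℂ V) ζ⁻¹ with hE'def
    have huE' : u ∈ E' := Module.End.mem_eigenspace_iff.mpr hau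
    have hdisj : E ⊓ E' = ⊥ := by
      rw [Submodule.eq_bot_iff]
      rintro w ⟨hw1, hw2⟩
      have h1 : ζ • w = ζ⁻¹ • w := by
        rw [← Module.End.mem_eigenspace_iff.mp hw1, ← Module.End.mem_eigenspace_iff.mp hw2]
      by_contra h0
      exact hcase (smul_left_injective ℂ h0 h1.symm)
    have hVle : finrank ℂ V ≤ 2 := by
      have h1 : finrank ℂ U ≤ 2 := by
        rw [hUdef, Submodule.span_insert]
        have := Submodule.finrank_sup_add_finrank_inf_eq
          (Submodule.span ℂ {v} : Submodule ℂ V) (Submodule.span ℂ {u})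
        have h2 : finrank ℂ (Submodule.span ℂ {v}) = 1 := finrank_span_singleton hv0
        have h3 : finrank ℂ (Submodule.span ℂ {u}) = 1 := finrank_span_singleton hu0
        omega
      rw [← finrank_top ℂ V, ← hUtop]
      exact h1
    have hsum : finrank ℂ E + finrank ℂ E' ≤ 2 := by
      have := Submodule.finrank_sup_add_finrank_inf_eq E E'
      rw [hdisj] at this
      simp only [finrank_bot, add_zero] at this
      have h2 : finrank ℂ (E ⊔ E' : Submodule ℂ V) ≤ finrank ℂ V := Submodule.finrank_le _
      omega
    have hE'1 : 1 ≤ finrank ℂ E' := by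
      have h1 : Submodule.span ℂ {u} ≤ E' := by
        rw [Submodule.span_singleton_le_iff_mem]; exact huE'
      have := Submodule.finrank_mono h1
      rw [finrank_span_singleton hu0] at this
      exact this
    omega

end StrongGelfandAux

open StrongGelfandAux Module in
/-- For every `n ≥ 2`, the pair `(Dic_{4n}, ⟨a⟩)` is a strong Gelfand pair,
where `⟨a⟩` is the maximal cyclic subgroup of order `2n`. -/
theorem isStrongGelfandPair_dicyclic_a (n : ℕ) (hn : 2 ≤ n) :
    IsStrongGelfandPair (QuaternionGroup n)
      (Subgroup.zpowers (QuaternionGroup.a 1)) := by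
  intro V W hV hW
  haveI := hV
  haveI := hW
  haveI : NeZero n := ⟨by omega⟩
  let H := Subgroup.zpowers (QuaternionGroup.a 1 : QuaternionGroup n)
  let X := (Action.res (FGModuleCat ℂ) H.subtype).obj V
  let g₀ : H := ⟨QuaternionGroup.a 1, Subgroup.mem_zpowers _⟩
  -- H is commutative
  have habel : ∀ h h' : H, h * h' = h' * h := by
    rintro ⟨x, hx⟩ ⟨y, hy⟩
    obtain ⟨k, rfl⟩ := Subgroup.mem_zpowers_iff.mp hx
    obtain ⟨m, rfl⟩ := Subgroup.mem_zpowers_iff.mp hy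
    ext
    show _ ^ k * _ ^ m = _ ^ m * _ ^ k
    rw [← zpow_add, ← zpow_add, add_comm]
  -- every element of H acts by a scalar on W
  have hscal : ∀ h : H, ∃ c : ℂ, ∀ w : W, W.ρ h w = c • w :=
    fun h => scalar W h (fun h' => habel h' h)
  obtain ⟨ζ, hζ⟩ := hscal g₀
  obtain ⟨w₀, hw₀⟩ := nontriv W
  have hWtop : Submodule.span ℂ {w₀} = ⊤ := by
    apply sub_top W
    · intro h w hw
      obtain ⟨c, hc⟩ := hscal h
      obtain ⟨d, rfl⟩ := Submodule.mem_span_singleton.mp hw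
      rw [map_smul, hc]
      exact Submodule.smul_mem _ _ (Submodule.smul_mem _ _
        (Submodule.mem_span_singleton_self _))
    · simpa [Submodule.span_singleton_eq_bot] using hw₀
  -- the evaluation map
  have hcomm : ∀ (f : W ⟶ X) (w : W), f.hom (W.ρ g₀ w) = V.ρ (QuaternionGroup.a 1) (f.hom w) := by
    intro f w
    have h1 := f.comm g₀
    have h2 : (Action.ρ W g₀ ≫ f.hom) w = (f.hom ≫ Action.ρ X g₀) w :=
      congrArg (fun (φ : W.V ⟶ X.V) => φ w) h1
    exact h2
  let Φ : (W ⟶ X) →ₗ[ℂ] V :=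
    { toFun := fun f => f.hom w₀
      map_add' := fun f g => by show (f + g).hom w₀ = _; rw [Action.add_hom]; rfl
      map_smul' := fun c f => by show (c • f).hom w₀ = _; rw [Action.smul_hom]; rfl }
  have hinj : Function.Injective Φ := by
    rw [← LinearMap.ker_eq_bot, Submodule.eq_bot_iff]
    intro f hf
    have hf0 : f.hom w₀ = 0 := hf
    refine Action.hom_ext _ _ ?_
    rw [Action.zero_hom]
    refine FGModuleCat.hom_ext (LinearMap.ext fun w => ?_)
    have hwmem : w ∈ Submodule.span ℂ {w₀} := by rw [hWtop]; trivial
    obtain ⟨c, rfl⟩ := Submodule.mem_span_singleton.mp hwmem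
    show f.hom (c • w₀) = 0
    rw [map_smul, hf0, smul_zero]
  have hrange : LinearMap.range Φ ≤
      Module.End.eigenspace (V.ρ (QuaternionGroup.a 1) : Module.End ℂ V) ζ := by
    rintro _ ⟨f, rfl⟩
    refine Module.End.mem_eigenspace_iff.mpr ?_
    show V.ρ (QuaternionGroup.a 1) (f.hom w₀) = ζ • f.hom w₀
    rw [← hcomm f w₀, hζ w₀, map_smul]
  calc finrank ℂ (W ⟶ X) = finrank ℂ (LinearMap.range Φ) :=
        (LinearMap.finrank_range_of_inj hinj).symm
    _ ≤ finrank ℂ (Module.End.eigenspace (V.ρ (QuaternionGroup.a 1) : Module.End ℂ V) ζ) :=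
        Submodule.finrank_mono hrange
    _ ≤ 1 := eig_le_one V ζ
end

section
/- Every subgroup of a dicyclic group is either cyclic or isomorphic to a dicyclic group. Precisely: for n ≥ 2, every subgroup H of Dic_{4n} is either cyclic or isomorphic to Dic_{4k} for some divisor k of n. -/
open QuaternionGroup

private lemma qg_a_inv {n : ℕ} (i : ZMod (2*n)) :
    (a i : QuaternionGroup n)⁻¹ = a (-i) := rfl

private lemma qg_xa_inv {n : ℕ} (i : ZMod (2*n)) :
    (xa i : QuaternionGroup n)⁻¹ = xa ((n : ZMod (2*n)) + i) := rfl

/-- Every subgroup of the dicyclic group `Dic_{4n}` (for `n ≥ 2`) is either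
cyclic or isomorphic to a dicyclic group `Dic_{4k}` for some divisor `k` of `n`. -/
theorem dicyclic_subgroup_cyclic_or_dicyclic (n : ℕ) (hn : 2 ≤ n)
    (H : Subgroup (QuaternionGroup n)) :
    IsCyclic H ∨ ∃ k : ℕ, k ∣ n ∧ Nonempty (H ≃* QuaternionGroup k) := by
  haveI : NeZero (2*n) := ⟨by omega⟩
  by_cases hxa : ∃ j : ZMod (2 * n), xa j ∈ H
  · right
    obtain ⟨j, hj⟩ := hxa
    set T : AddSubgroup ℤ :=
      { carrier := {z : ℤ | a ((z : ℤ) : ZMod (2 * n)) ∈ H}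
        zero_mem' := by
          show a ((0:ℤ) : ZMod (2 * n)) ∈ H
          rw [Int.cast_zero, ← one_def]
          exact H.one_mem
        add_mem' := fun {x y} hx hy => by
          have := H.mul_mem hx hy
          rw [a_mul_a] at this
          simpa using this
        neg_mem' := fun {x} hx => by
          have := H.inv_mem hx
          rw [qg_a_inv] at this
          simpa using this } with hTdef
    have hmemT : ∀ z : ℤ, z ∈ T ↔ a ((z : ℤ) : ZMod (2 * n)) ∈ H := fun z => Iff.rfl
    obtain ⟨d', hT⟩ := Int.subgroup_cyclic T
    have hTmem : ∀ z : ℤ, z ∈ T ↔ d' ∣ z := by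
      intro z
      rw [hT]
      constructor
      · intro h
        exact Int.mem_zmultiples_iff.mp (by
          rwa [← AddSubgroup.zmultiples_eq_closure] at h)
      · intro h
        rw [← AddSubgroup.zmultiples_eq_closure]
        exact Int.mem_zmultiples_iff.mpr h
    have hnT : (n : ℤ) ∈ T := by
      have h2 : (xa j) * (xa j) ∈ H := H.mul_mem hj hj
      rw [xa_mul_xa] at h2
      rw [hmemT]
      simpa using h2
    have hd'n : d' ∣ (n : ℤ) := (hTmem n).mp hnT
    set d : ℕ := d'.natAbs with hddef
    have hdvd : ∀ z : ℤ, z ∈ T ↔ (d : ℤ) ∣ z := fun z =>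
      (hTmem z).trans (Int.natAbs_dvd).symm
    have hdn : d ∣ n := Int.ofNat_dvd.mp (by rwa [hddef, Int.natAbs_dvd])
    have hd0 : d ≠ 0 := by
      intro h
      have h0 : d' = 0 := Int.natAbs_eq_zero.mp h
      rw [h0] at hd'n
      have := Int.zero_dvd.mp hd'n
      omega
    set k := n / d with hkdef
    have hdk : d * k = n := Nat.mul_div_cancel' hdn
    have hkdvd : k ∣ n := Nat.div_dvd_of_dvd hdn
    refine ⟨k, hkdvd, ?_⟩
    have hcond : ((Int.castAddHom (ZMod (2*n))).comp (AddMonoidHom.mulLeft (d:ℤ)))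
        ((2*k : ℕ) : ℤ) = 0 := by
      have hdkz : (d : ℤ) * (k : ℤ) = (n : ℤ) := by exact_mod_cast hdk
      have h1 : (d : ℤ) * ((2*k : ℕ) : ℤ) = ((2*n : ℕ) : ℤ) := by
        push_cast
        linear_combination 2 * hdkz
      simp only [AddMonoidHom.comp_apply, AddMonoidHom.coe_mulLeft, Int.coe_castAddHom, h1]
      exact_mod_cast ZMod.natCast_self (2*n)
    set q : ZMod (2*k) →+ ZMod (2*n) := ZMod.lift (2*k) ⟨_, hcond⟩ with hqdef
    have hq : ∀ z : ℤ, q ((z : ℤ) : ZMod (2*k)) = (((d:ℤ) * z : ℤ) : ZMod (2*n)) := by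
      intro z
      rw [hqdef, ZMod.lift_coe]
      simp
    have hqinj : Function.Injective q := by
      rw [injective_iff_map_eq_zero]
      intro x hx
      obtain ⟨z, rfl⟩ := ZMod.intCast_surjective x
      rw [hq, ZMod.intCast_zmod_eq_zero_iff_dvd] at hx
      rw [ZMod.intCast_zmod_eq_zero_iff_dvd]
      have hdkz : (d : ℤ) * (k : ℤ) = (n : ℤ) := by exact_mod_cast hdk
      have h2n : ((2*n:ℕ):ℤ) = (d:ℤ) * ((2*k:ℕ):ℤ) := by
        push_cast
        linear_combination -2 * hdkz
      rw [h2n] at hx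
      exact (mul_dvd_mul_iff_left (by exact_mod_cast hd0 : (d:ℤ) ≠ 0)).mp hx
    have hqk : q ((k : ℕ) : ZMod (2*k)) = ((n : ℕ) : ZMod (2*n)) := by
      have := hq (k : ℤ)
      push_cast at this
      rw [this]
      norm_cast
      rw [hdk]
    set fs : QuaternionGroup k → QuaternionGroup n := fun x =>
      match x with
      | .a i => .a (q i)
      | .xa i => .xa (j + q i) with hfsdef
    have hfa : ∀ i : ZMod (2*k), fs (a i) = a (q i) := fun i => rfl
    have hfxa : ∀ i : ZMod (2*k), fs (xa i) = xa (j + q i) := fun i => rfl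
    have hmul : ∀ x y : QuaternionGroup k, fs (x * y) = fs x * fs y := by
      rintro (i | i) (i' | i')
      · rw [a_mul_a, hfa, hfa, hfa, a_mul_a, map_add]
      · rw [a_mul_xa, hfxa, hfa, hfxa, a_mul_xa, map_sub]
        congr 1
        ring
      · rw [xa_mul_a, hfxa, hfa, hfxa, xa_mul_a, map_add]
        congr 1
        ring
      · rw [xa_mul_xa, hfa, hfxa, hfxa, xa_mul_xa, map_sub, map_add, hqk]
        congr 1
        ring
    set f : QuaternionGroup k →* QuaternionGroup n := MonoidHom.mk' fs hmul with hfdef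
    have hfa' : ∀ i : ZMod (2*k), f (a i) = a (q i) := fun i => rfl
    have hfxa' : ∀ i : ZMod (2*k), f (xa i) = xa (j + q i) := fun i => rfl
    have hfinj : Function.Injective f := by
      have hfs : Function.Injective fs := by
        rintro (i | i) (i' | i') h
        · rw [hfa, hfa] at h
          injection h with h
          rw [hqinj h]
        · rw [hfa, hfxa] at h
          cases h
        · rw [hfxa, hfa] at h
          cases h
        · rw [hfxa, hfxa] at h
          injection h with h
          rw [hqinj (add_left_cancel h)]
      exact hfs
    have hrange : f.range = H := by
      apply le_antisymm
      · rintro x ⟨y, rfl⟩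
        cases y with
        | a i =>
          obtain ⟨z, rfl⟩ := ZMod.intCast_surjective i
          rw [hfa', hq]
          exact (hmemT _).mp ((hdvd _).mpr ⟨z, rfl⟩)
        | xa i =>
          obtain ⟨z, rfl⟩ := ZMod.intCast_surjective i
          rw [hfxa', hq]
          have h1 : a (((d:ℤ)*z : ℤ) : ZMod (2*n)) ∈ H :=
            (hmemT _).mp ((hdvd _).mpr ⟨z, rfl⟩)
          have := H.mul_mem hj h1
          rwa [xa_mul_a] at this
      · intro x hx
        cases x with
        | a i =>
          obtain ⟨z, rfl⟩ := ZMod.intCast_surjective i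
          obtain ⟨t, rfl⟩ := (hdvd z).mp ((hmemT z).mpr hx)
          exact ⟨.a ((t : ℤ) : ZMod (2*k)), by rw [hfa', hq]⟩
        | xa i =>
          have h1 : a (i - j) ∈ H := by
            have h2 := H.mul_mem (H.inv_mem hj) hx
            rw [qg_xa_inv, xa_mul_xa] at h2
            have h3 : (n : ZMod (2*n)) + i - ((n : ZMod (2*n)) + j) = i - j := by ring
            rwa [h3] at h2
          obtain ⟨z, hz⟩ := ZMod.intCast_surjective (i - j)
          rw [← hz] at h1
          obtain ⟨t, rfl⟩ := (hdvd z).mp ((hmemT z).mpr h1)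
          refine ⟨.xa ((t : ℤ) : ZMod (2*k)), ?_⟩
          rw [hfxa', hq, hz]
          congr 1
          ring
    exact ⟨((MonoidHom.ofInjective hfinj).trans (MulEquiv.subgroupCongr hrange)).symm⟩
  · left
    push_neg at hxa
    have hle : H ≤ Subgroup.zpowers (a 1 : QuaternionGroup n) := by
      intro x hx
      cases x with
      | a i =>
        refine ⟨(i.val : ℤ), ?_⟩
        show (a 1 : QuaternionGroup n) ^ (i.val : ℤ) = a i
        rw [zpow_natCast, a_one_pow]
        simp [ZMod.natCast_val, ZMod.cast_id]
      | xa i => exact absurd hx (hxa i)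
    haveI : IsCyclic (Subgroup.zpowers (a 1 : QuaternionGroup n)) := by
      refine ⟨⟨⟨a 1, Subgroup.mem_zpowers _⟩, ?_⟩⟩
      rintro ⟨x, m, rfl⟩
      exact ⟨m, by ext; simp⟩
    exact Subgroup.isCyclic_of_le hle
end
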